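/- arXiv:2106.02713 — 11 statements merged into one kernel-verified Lean document; each statement's English description precedes it below -/
import Mathlib

section
/- Let N ≥ 1, let ψ₁, …, ψ_m be i.i.d. random vectors in ℝ^N, each distributed as the centered multivariate Gaussian with positive-definite covariance matrix Σ, let η > 0, and let Δ ∈ ℝ^N be a fixed vector with C = ΔΔᵀ. Define the one-step SGD update Δ' = Δ − (η/m) Σ_{i=1}^m ψᵢ (ψᵢᵀ Δ). Then E[Δ' Δ'ᵀ] = (I − ηΣ) C (I − ηΣ) + (η²/m) [ Σ C Σ + Σ · Tr(Σ C) ]. -/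
open MeasureTheory ProbabilityTheory Matrix Real
open scoped ENNReal NNReal

lemma integrable_pow_mul_gauss (n : ℕ) :
    Integrable (fun x : ℝ => x ^ n * Real.exp (-x ^ 2 / 2)) := by
  have h := integrable_rpow_mul_exp_neg_mul_sq (b := (1:ℝ)/2) (by norm_num)
    (s := n) (by exact lt_of_lt_of_le neg_one_lt_zero (Nat.cast_nonneg n))
  refine h.congr ?_
  filter_upwards with x
  rw [Real.rpow_natCast]
  ring_nf

lemma gauss_M0 : ∫ x : ℝ, Real.exp (-x ^ 2 / 2) = Real.sqrt (2 * π) := by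
  have h := integral_gaussian (1/2)
  rw [show π / (1/2 : ℝ) = 2 * π by ring] at h
  rw [← h]
  congr 1
  funext x
  ring_nf

lemma gauss_Mrec (n : ℕ) :
    ∫ x : ℝ, x ^ (n + 2) * Real.exp (-x ^ 2 / 2)
      = (n + 1 : ℝ) * ∫ x : ℝ, x ^ n * Real.exp (-x ^ 2 / 2) := by
  have hv : ∀ x : ℝ, HasDerivAt (fun y : ℝ => Real.exp (-y ^ 2 / 2))
      (-x * Real.exp (-x ^ 2 / 2)) x := by
    intro x
    have h1 : HasDerivAt (fun y : ℝ => -y ^ 2 / 2) (-x) x := by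
      have := ((hasDerivAt_pow 2 x).neg).div_const 2
      simpa using this.congr_deriv (by push_cast; ring)
    have := h1.exp
    simpa [mul_comm] using this
  have hu : ∀ x : ℝ, HasDerivAt (fun y : ℝ => y ^ (n + 1)) ((n + 1 : ℝ) * x ^ n) x := by
    intro x
    simpa using hasDerivAt_pow (n + 1) x
  have huv' : Integrable ((fun y : ℝ => y ^ (n + 1)) * fun x : ℝ => -x * Real.exp (-x ^ 2 / 2)) := by
    have := (integrable_pow_mul_gauss (n + 2)).neg
    refine this.congr ?_
    filter_upwards with x
    simp [Pi.mul_apply]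
    ring
  have hu'v : Integrable ((fun x : ℝ => (n + 1 : ℝ) * x ^ n) * fun y : ℝ => Real.exp (-y ^ 2 / 2)) := by
    have := (integrable_pow_mul_gauss n).const_mul (n + 1 : ℝ)
    refine this.congr ?_
    filter_upwards with x
    simp [Pi.mul_apply]
    ring
  have huv : Integrable ((fun y : ℝ => y ^ (n + 1)) * fun y : ℝ => Real.exp (-y ^ 2 / 2)) := by
    have := integrable_pow_mul_gauss (n + 1)
    refine this.congr ?_
    filter_upwards with x
    simp [Pi.mul_apply]
  have key := integral_mul_deriv_eq_deriv_mul_of_integrable (fun x _ => hu x) (fun x _ => hv x) huv' hu'v huv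
  -- key : ∫ x, x ^ (n+1) * (-x * exp (-x^2/2)) = - ∫ x, ((n+1) * x^n) * exp (-x^2/2)
  have e1 : ∫ x : ℝ, x ^ (n + 1) * (-x * Real.exp (-x ^ 2 / 2))
      = - ∫ x : ℝ, x ^ (n + 2) * Real.exp (-x ^ 2 / 2) := by
    rw [← integral_neg]
    congr 1; funext x; ring
  have e2 : ∫ x : ℝ, ((n + 1 : ℝ) * x ^ n) * Real.exp (-x ^ 2 / 2)
      = (n + 1 : ℝ) * ∫ x : ℝ, x ^ n * Real.exp (-x ^ 2 / 2) := by
    rw [← integral_const_mul]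
    congr 1; funext x; ring
  rw [e1, e2] at key
  linarith [key]

lemma gauss_M1 : ∫ x : ℝ, x ^ 1 * Real.exp (-x ^ 2 / 2) = 0 := by
  have hv : ∀ x : ℝ, HasDerivAt (fun y : ℝ => Real.exp (-y ^ 2 / 2))
      (-x * Real.exp (-x ^ 2 / 2)) x := by
    intro x
    have h1 : HasDerivAt (fun y : ℝ => -y ^ 2 / 2) (-x) x := by
      have := ((hasDerivAt_pow 2 x).neg).div_const 2
      simpa using this.congr_deriv (by push_cast; ring)
    have := h1.exp
    simpa [mul_comm] using this
  have hu : ∀ x : ℝ, HasDerivAt (fun _ : ℝ => (1:ℝ)) ((fun _ : ℝ => (0:ℝ)) x) x := by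
    intro x; simpa using hasDerivAt_const x (1:ℝ)
  have huv' : Integrable ((fun _ : ℝ => (1:ℝ)) * fun x : ℝ => -x * Real.exp (-x ^ 2 / 2)) := by
    have := (integrable_pow_mul_gauss 1).neg
    refine this.congr ?_
    filter_upwards with x
    simp [Pi.mul_apply]
  have hu'v : Integrable ((fun _ : ℝ => (0:ℝ)) * fun y : ℝ => Real.exp (-y ^ 2 / 2)) := by
    have : ((fun _ : ℝ => (0:ℝ)) * fun y : ℝ => Real.exp (-y ^ 2 / 2)) = fun _ : ℝ => (0:ℝ) := by
      funext x; simp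
    rw [this]
    exact integrable_zero _ _ _
  have huv : Integrable ((fun _ : ℝ => (1:ℝ)) * fun y : ℝ => Real.exp (-y ^ 2 / 2)) := by
    have := integrable_pow_mul_gauss 0
    refine this.congr ?_
    filter_upwards with x
    simp [Pi.mul_apply]
  have key := integral_mul_deriv_eq_deriv_mul_of_integrable (fun x _ => hu x) (fun x _ => hv x) huv' hu'v huv
  have e1 : ∫ x : ℝ, (1:ℝ) * (-x * Real.exp (-x ^ 2 / 2))
      = - ∫ x : ℝ, x ^ 1 * Real.exp (-x ^ 2 / 2) := by
    rw [← integral_neg]; congr 1; funext x; ring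
  rw [e1] at key
  simp only [zero_mul, integral_zero, neg_zero] at key
  linarith [key]

lemma gaussianReal_integral_eq (f : ℝ → ℝ) :
    ∫ x, f x ∂(gaussianReal 0 1)
      = (Real.sqrt (2 * π))⁻¹ * ∫ x : ℝ, Real.exp (-x ^ 2 / 2) * f x := by
  rw [gaussianReal_of_var_ne_zero 0 one_ne_zero]
  have hmeas : Measurable fun x : ℝ => (gaussianPDFReal 0 1 x).toNNReal :=
    (measurable_gaussianPDFReal 0 1).real_toNNReal
  have hpdf : (gaussianPDF 0 1) = fun x => ((gaussianPDFReal 0 1 x).toNNReal : ℝ≥0∞) := by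
    funext x; rfl
  rw [hpdf, integral_withDensity_eq_integral_smul hmeas]
  rw [← integral_const_mul]
  congr 1
  funext x
  have hnn : 0 ≤ gaussianPDFReal 0 1 x := gaussianPDFReal_nonneg 0 1 x
  rw [NNReal.smul_def, smul_eq_mul, Real.coe_toNNReal _ hnn]
  rw [gaussianPDFReal]
  push_cast
  rw [mul_one, mul_one, sub_zero, mul_assoc]

noncomputable def gmom (n : ℕ) : ℝ := ∫ x, x ^ n ∂(gaussianReal 0 1)

lemma sqrt_two_pi_pos : (0:ℝ) < Real.sqrt (2 * π) :=
  Real.sqrt_pos.mpr (by positivity)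

lemma gmom_eq (n : ℕ) :
    gmom n = (Real.sqrt (2 * π))⁻¹ * ∫ x : ℝ, x ^ n * Real.exp (-x ^ 2 / 2) := by
  rw [gmom, gaussianReal_integral_eq]
  congr 1
  apply integral_congr_ae
  filter_upwards with x
  ring

lemma gmom_zero : gmom 0 = 1 := by
  rw [gmom_eq]
  simp only [pow_zero, one_mul]
  rw [show (fun x : ℝ => Real.exp (-x ^ 2 / 2)) = fun x : ℝ => Real.exp (-x ^ 2 / 2) from rfl]
  rw [gauss_M0]   -- may need integrand match
  exact inv_mul_cancel₀ (ne_of_gt sqrt_two_pi_pos)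

lemma gmom_one : gmom 1 = 0 := by rw [gmom_eq, gauss_M1, mul_zero]

lemma gmom_two : gmom 2 = 1 := by
  rw [gmom_eq, show 2 = 0 + 2 from rfl, gauss_Mrec 0]
  have : ∫ x : ℝ, x ^ 0 * Real.exp (-x ^ 2 / 2) = Real.sqrt (2 * π) := by
    rw [← gauss_M0]; apply integral_congr_ae; filter_upwards with x; simp
  rw [this]
  push_cast
  rw [zero_add, one_mul]
  exact inv_mul_cancel₀ (ne_of_gt sqrt_two_pi_pos)

lemma gmom_three : gmom 3 = 0 := by
  rw [gmom_eq, show 3 = 1 + 2 from rfl, gauss_Mrec 1, gauss_M1, mul_zero, mul_zero]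

lemma gmom_four : gmom 4 = 3 := by
  rw [gmom_eq, show 4 = 2 + 2 from rfl, gauss_Mrec 2]
  have h2 : ∫ x : ℝ, x ^ 2 * Real.exp (-x ^ 2 / 2) = Real.sqrt (2 * π) := by
    rw [show 2 = 0 + 2 from rfl, gauss_Mrec 0]
    have : ∫ x : ℝ, x ^ 0 * Real.exp (-x ^ 2 / 2) = Real.sqrt (2 * π) := by
      rw [← gauss_M0]; apply integral_congr_ae; filter_upwards with x; simp
    rw [this]; push_cast; ring
  rw [h2]
  push_cast
  rw [show ((2:ℝ) + 1) = 3 by norm_num]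
  rw [show (√(2 * π))⁻¹ * (3 * √(2 * π)) = 3 * ((√(2 * π))⁻¹ * √(2 * π)) by ring]
  rw [inv_mul_cancel₀ (ne_of_gt sqrt_two_pi_pos), mul_one]

lemma integrable_pow_gauss (n : ℕ) :
    Integrable (fun x : ℝ => x ^ n) (gaussianReal 0 1) := by
  rw [gaussianReal_of_var_ne_zero 0 one_ne_zero]
  have hmeas : Measurable fun x : ℝ => (gaussianPDFReal 0 1 x).toNNReal :=
    (measurable_gaussianPDFReal 0 1).real_toNNReal
  have hpdf : (gaussianPDF 0 1) = fun x => ((gaussianPDFReal 0 1 x).toNNReal : ℝ≥0∞) := by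
    funext x; rfl
  rw [hpdf, integrable_withDensity_iff_integrable_smul hmeas]
  have := (integrable_pow_mul_gauss n).const_mul ((Real.sqrt (2 * π))⁻¹)
  refine this.congr ?_
  filter_upwards with x
  have hnn : 0 ≤ gaussianPDFReal 0 1 x := gaussianPDFReal_nonneg 0 1 x
  rw [NNReal.smul_def, smul_eq_mul, Real.coe_toNNReal _ hnn, gaussianPDFReal]
  push_cast
  rw [mul_one, mul_one, sub_zero]
  ring

lemma pi_integral_prod {E : Type*} [MeasurableSpace E] (ν : Measure E) [SigmaFinite ν]
    {ι : Type*} [Fintype ι] (f : ι → E → ℝ) :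
    ∫ x : ι → E, ∏ i, f i (x i) ∂(Measure.pi fun _ => ν) = ∏ i, ∫ x, f i x ∂ν := by
  letI : MeasureSpace E := ⟨ν⟩
  exact MeasureTheory.integral_fintype_prod_eq_prod f

lemma pi_integrable_prod {E : Type*} [MeasurableSpace E] (ν : Measure E) [SigmaFinite ν]
    {ι : Type*} [Fintype ι] (f : ι → E → ℝ) (hf : ∀ i, Integrable (f i) ν) :
    Integrable (fun x : ι → E => ∏ i, f i (x i)) (Measure.pi fun _ => ν) := by
  letI : MeasureSpace E := ⟨ν⟩
  exact MeasureTheory.Integrable.fintype_prod hf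

section eval
variable {E : Type*} [MeasurableSpace E] (ν : Measure E) [IsProbabilityMeasure ν]
  {ι : Type*} [Fintype ι] [DecidableEq ι]

lemma integral_eval (a : ι) (f : E → ℝ) :
    ∫ x : ι → E, f (x a) ∂(Measure.pi fun _ => ν) = ∫ y, f y ∂ν := by
  have h : (fun x : ι → E => f (x a))
      = fun x : ι → E => ∏ i, (fun i (y : E) => if i = a then f y else 1) i (x i) := by
    funext x
    rw [Finset.prod_ite_eq' Finset.univ a (fun i => f (x i))]
    simp
  rw [h, pi_integral_prod ν (fun i (y : E) => if i = a then f y else 1)]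
  have h2 : ∀ i, (∫ y, (if i = a then f y else 1) ∂ν) = if i = a then ∫ y, f y ∂ν else 1 := by
    intro i
    by_cases hi : i = a <;> simp [hi]
  simp_rw [h2]
  rw [Finset.prod_ite_eq' Finset.univ a (fun _ => ∫ y, f y ∂ν)]
  simp

lemma integrable_eval (a : ι) (f : E → ℝ) (hf : Integrable f ν) :
    Integrable (fun x : ι → E => f (x a)) (Measure.pi fun _ => ν) := by
  have h : (fun x : ι → E => f (x a))
      = fun x : ι → E => ∏ i, (fun i (y : E) => if i = a then f y else 1) i (x i) := by
    funext x
    rw [Finset.prod_ite_eq' Finset.univ a (fun i => f (x i))]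
    simp
  rw [h]
  refine pi_integrable_prod ν (fun i (y : E) => if i = a then f y else 1) ?_
  intro i
  by_cases hi : i = a <;> simp only [hi, if_true, if_false]
  · exact hf
  · exact integrable_const 1

lemma integral_eval2 {a b : ι} (hab : a ≠ b) (f g : E → ℝ) :
    ∫ x : ι → E, f (x a) * g (x b) ∂(Measure.pi fun _ => ν)
      = (∫ y, f y ∂ν) * ∫ y, g y ∂ν := by
  have h : (fun x : ι → E => f (x a) * g (x b))
      = fun x : ι → E => ∏ i,
          (fun i (y : E) => (if i = a then f y else 1) * (if i = b then g y else 1)) i (x i) := by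
    funext x
    rw [Finset.prod_mul_distrib]
    rw [Finset.prod_ite_eq' Finset.univ a (fun i => f (x i)),
      Finset.prod_ite_eq' Finset.univ b (fun i => g (x i))]
    simp
  rw [h, pi_integral_prod ν (fun i (y : E) => (if i = a then f y else 1) * (if i = b then g y else 1))]
  have h2 : ∀ i, (∫ y, (if i = a then f y else 1) * (if i = b then g y else 1) ∂ν)
      = (if i = a then ∫ y, f y ∂ν else 1) * (if i = b then ∫ y, g y ∂ν else 1) := by
    intro i
    by_cases hia : i = a
    · subst hia
      simp [hab]
    · by_cases hib : i = b <;> simp [hia, hib, Ne.symm hab]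
  simp_rw [h2]
  rw [Finset.prod_mul_distrib,
    Finset.prod_ite_eq' Finset.univ a (fun _ => ∫ y, f y ∂ν),
    Finset.prod_ite_eq' Finset.univ b (fun _ => ∫ y, g y ∂ν)]
  simp

lemma integrable_eval2 {a b : ι} (hab : a ≠ b) (f g : E → ℝ)
    (hf : Integrable f ν) (hg : Integrable g ν) :
    Integrable (fun x : ι → E => f (x a) * g (x b)) (Measure.pi fun _ => ν) := by
  have h : (fun x : ι → E => f (x a) * g (x b))
      = fun x : ι → E => ∏ i,
          (fun i (y : E) => (if i = a then f y else 1) * (if i = b then g y else 1)) i (x i) := by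
    funext x
    rw [Finset.prod_mul_distrib]
    rw [Finset.prod_ite_eq' Finset.univ a (fun i => f (x i)),
      Finset.prod_ite_eq' Finset.univ b (fun i => g (x i))]
    simp
  rw [h]
  refine pi_integrable_prod ν
    (fun i (y : E) => (if i = a then f y else 1) * (if i = b then g y else 1)) ?_
  intro i
  by_cases hia : i = a
  · subst hia
    simp only [if_true, hab, if_false, mul_one]
    exact hf
  · by_cases hib : i = b
    · subst hib
      simp only [if_true, Ne.symm hab, if_false, one_mul]
      exact hg
    · simp only [hia, hib, if_false, one_mul]
      exact integrable_const 1

end eval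


section vec
variable {N : ℕ}

noncomputable abbrev gaussVec (N : ℕ) : Measure (Fin N → ℝ) :=
  Measure.pi fun _ : Fin N => gaussianReal 0 1

lemma mono2_pt (k l : Fin N) (y : Fin N → ℝ) :
    y k * y l = ∏ t, y t ^ ((if t = k then 1 else 0) + (if t = l then 1 else 0) : ℕ) := by
  simp_rw [pow_add, pow_ite, pow_one, pow_zero, Finset.prod_mul_distrib,
    Finset.prod_ite_eq' Finset.univ _ (fun t => y t), Finset.mem_univ, if_true]

lemma mono4_pt (k l p q : Fin N) (y : Fin N → ℝ) :
    y k * y l * y p * y q = ∏ t, y t ^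
      ((if t = k then 1 else 0) + (if t = l then 1 else 0)
        + (if t = p then 1 else 0) + (if t = q then 1 else 0) : ℕ) := by
  simp_rw [pow_add, pow_ite, pow_one, pow_zero, Finset.prod_mul_distrib,
    Finset.prod_ite_eq' Finset.univ _ (fun t => y t), Finset.mem_univ, if_true]

lemma integrable_mono2 (k l : Fin N) :
    Integrable (fun y : Fin N → ℝ => y k * y l) (gaussVec N) := by
  have h : (fun y : Fin N → ℝ => y k * y l) = fun y : Fin N → ℝ => ∏ t,
      (fun t (x : ℝ) => x ^ ((if t = k then 1 else 0) + (if t = l then 1 else 0) : ℕ)) t (y t) := by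
    funext y; exact mono2_pt k l y
  rw [h]
  exact pi_integrable_prod _ _ (fun t => integrable_pow_gauss _)

lemma integrable_mono4 (k l p q : Fin N) :
    Integrable (fun y : Fin N → ℝ => y k * y l * y p * y q) (gaussVec N) := by
  have h : (fun y : Fin N → ℝ => y k * y l * y p * y q) = fun y : Fin N → ℝ => ∏ t,
      (fun t (x : ℝ) => x ^ ((if t = k then 1 else 0) + (if t = l then 1 else 0)
        + (if t = p then 1 else 0) + (if t = q then 1 else 0) : ℕ)) t (y t) := by
    funext y; exact mono4_pt k l p q y
  rw [h]
  exact pi_integrable_prod _ _ (fun t => integrable_pow_gauss _)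

lemma integral_mono2 (k l : Fin N) :
    ∫ y : Fin N → ℝ, y k * y l ∂(gaussVec N) = if k = l then 1 else 0 := by
  have h : (fun y : Fin N → ℝ => y k * y l) = fun y : Fin N → ℝ => ∏ t,
      (fun t (x : ℝ) => x ^ ((if t = k then 1 else 0) + (if t = l then 1 else 0) : ℕ)) t (y t) := by
    funext y; exact mono2_pt k l y
  rw [h, pi_integral_prod _ (fun t (x : ℝ) =>
    x ^ ((if t = k then 1 else 0) + (if t = l then 1 else 0) : ℕ))]
  by_cases hkl : k = l
  · subst hkl
    simp only [if_true]
    refine Finset.prod_eq_one fun t _ => ?_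
    by_cases ht : t = k <;> simp only [ht, if_true, if_false]
    · exact gmom_two
    · exact gmom_zero
  · simp only [hkl, if_false]
    apply Finset.prod_eq_zero (Finset.mem_univ k)
    simp only [if_true, hkl, if_false]
    exact gmom_one

end vec

section mono4
variable {N : ℕ}

lemma integral_mono4 (k l p q : Fin N) :
    ∫ y : Fin N → ℝ, y k * y l * y p * y q ∂(gaussVec N)
      = (if k = l then (1:ℝ) else 0) * (if p = q then 1 else 0)
        + (if k = p then (1:ℝ) else 0) * (if l = q then 1 else 0)
        + (if k = q then (1:ℝ) else 0) * (if l = p then 1 else 0) := by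
  have h : (fun y : Fin N → ℝ => y k * y l * y p * y q) = fun y : Fin N → ℝ => ∏ t,
      (fun t (x : ℝ) => x ^ ((if t = k then 1 else 0) + (if t = l then 1 else 0)
        + (if t = p then 1 else 0) + (if t = q then 1 else 0) : ℕ)) t (y t) := by
    funext y; exact mono4_pt k l p q y
  rw [h, pi_integral_prod _ (fun t (x : ℝ) =>
      x ^ ((if t = k then 1 else 0) + (if t = l then 1 else 0)
        + (if t = p then 1 else 0) + (if t = q then 1 else 0) : ℕ))]
  by_cases hkl : k = l
  · subst hkl
    by_cases hkp : k = p
    · subst hkp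
      by_cases hkq : k = q
      · subst hkq
        trans (3:ℝ)
        · rw [Finset.prod_eq_single k (fun b _ hb => by simp only [if_neg hb]; exact gmom_zero)
            (fun hk => absurd (Finset.mem_univ k) hk)]
          simp only [if_pos rfl]
          exact gmom_four
        · norm_num
      · trans (0:ℝ)
        · apply Finset.prod_eq_zero (Finset.mem_univ q)
          simp only [if_neg (Ne.symm hkq), if_pos rfl]
          exact gmom_one
        · simp [hkq]
    · by_cases hpq : p = q
      · subst hpq
        trans (1:ℝ)
        · refine Finset.prod_eq_one fun t _ => ?_
          by_cases ht : t = k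
          · subst ht
            simp only [if_pos rfl, if_neg hkp]
            exact gmom_two
          · by_cases ht2 : t = p
            · subst ht2
              simp only [if_pos rfl, if_neg ht]
              exact gmom_two
            · simp only [if_neg ht, if_neg ht2]
              exact gmom_zero
        · simp [hkp]
      · by_cases hkq : k = q
        · subst hkq
          trans (0:ℝ)
          · apply Finset.prod_eq_zero (Finset.mem_univ k)
            simp only [if_pos rfl, if_neg hkp]
            exact gmom_three
          · simp [hkp, hpq, Ne.symm hkp]
        · trans (0:ℝ)
          · apply Finset.prod_eq_zero (Finset.mem_univ q)
            simp only [if_neg (Ne.symm hkq), if_neg (Ne.symm hpq), if_pos rfl]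
            exact gmom_one
          · simp [hkp, hkq, hpq]
  · by_cases hpq : p = q
    · subst hpq
      by_cases hkp : k = p
      · subst hkp
        trans (0:ℝ)
        · apply Finset.prod_eq_zero (Finset.mem_univ l)
          simp only [if_neg (Ne.symm hkl), if_pos rfl]
          exact gmom_one
        · simp [hkl, Ne.symm hkl]
      · by_cases hlp : l = p
        · subst hlp
          trans (0:ℝ)
          · apply Finset.prod_eq_zero (Finset.mem_univ k)
            simp only [if_pos rfl, if_neg hkl, if_neg hkp]
            exact gmom_one
          · simp [hkl, hkp]
        · trans (0:ℝ)
          · apply Finset.prod_eq_zero (Finset.mem_univ k)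
            simp only [if_pos rfl, if_neg hkl, if_neg hkp]
            exact gmom_one
          · simp [hkl, hkp, hlp]
    · by_cases hkp : k = p
      · subst hkp
        by_cases hlq : l = q
        · subst hlq
          trans (1:ℝ)
          · refine Finset.prod_eq_one fun t _ => ?_
            by_cases ht : t = k
            · subst ht
              simp only [if_pos rfl, if_neg hkl]
              exact gmom_two
            · by_cases ht2 : t = l
              · subst ht2
                simp only [if_pos rfl, if_neg ht]
                exact gmom_two
              · simp only [if_neg ht, if_neg ht2]
                exact gmom_zero
          · simp [hkl, Ne.symm hkl]
        · trans (0:ℝ)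
          · apply Finset.prod_eq_zero (Finset.mem_univ q)
            simp only [if_neg (Ne.symm hpq), if_neg (Ne.symm hlq), if_pos rfl]
            exact gmom_one
          · simp [hkl, hlq, hpq]
      · by_cases hkq : k = q
        · subst hkq
          by_cases hlp : l = p
          · subst hlp
            trans (1:ℝ)
            · refine Finset.prod_eq_one fun t _ => ?_
              by_cases ht : t = k
              · subst ht
                simp only [if_pos rfl, if_neg hkl, if_neg hkp]
                exact gmom_two
              · by_cases ht2 : t = l
                · subst ht2
                  simp only [if_pos rfl, if_neg ht]
                  exact gmom_two
                · simp only [if_neg ht, if_neg ht2]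
                  exact gmom_zero
            · simp [hkl, hkp]
          · trans (0:ℝ)
            · apply Finset.prod_eq_zero (Finset.mem_univ p)
              simp only [if_neg (Ne.symm hkp), if_neg (Ne.symm hlp), if_pos rfl]
              exact gmom_one
            · simp [hkl, hkp, hlp]
        · by_cases hlp : l = p
          · subst hlp
            trans (0:ℝ)
            · apply Finset.prod_eq_zero (Finset.mem_univ k)
              simp only [if_pos rfl, if_neg hkl, if_neg hkq]
              exact gmom_one
            · simp [hkl, hkq, hpq]
          · by_cases hlq : l = q
            · subst hlq
              trans (0:ℝ)
              · apply Finset.prod_eq_zero (Finset.mem_univ k)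
                simp only [if_pos rfl, if_neg hkl, if_neg hkp]
                exact gmom_one
              · simp [hkl, hkp, hlp]
            · trans (0:ℝ)
              · apply Finset.prod_eq_zero (Finset.mem_univ k)
                simp only [if_pos rfl, if_neg hkl, if_neg hkp, if_neg hkq]
                exact gmom_one
              · simp [hkl, hkp, hkq, hlp, hlq]
end mono4

section dot
variable {N : ℕ} (u w u' w' : Fin N → ℝ)

lemma dot2_pt (y : Fin N → ℝ) :
    (u ⬝ᵥ y) * (w ⬝ᵥ y) = ∑ k, ∑ l, (u k * w l) * (y k * y l) := by
  simp only [dotProduct, Finset.sum_mul_sum]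
  apply Finset.sum_congr rfl; intro k _
  apply Finset.sum_congr rfl; intro l _
  ring

lemma dot4_pt (y : Fin N → ℝ) :
    ((u ⬝ᵥ y) * (w ⬝ᵥ y)) * ((u' ⬝ᵥ y) * (w' ⬝ᵥ y))
      = ∑ k, ∑ l, ∑ p, ∑ q, (u k * w p * u' l * w' q) * (y k * y l * y p * y q) := by
  simp only [dotProduct, Finset.sum_mul_sum]
  apply Finset.sum_congr rfl; intro k _
  apply Finset.sum_congr rfl; intro l _
  apply Finset.sum_congr rfl; intro p _
  apply Finset.sum_congr rfl; intro q _
  ring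

lemma integrable_dot2 :
    Integrable (fun y : Fin N → ℝ => (u ⬝ᵥ y) * (w ⬝ᵥ y)) (gaussVec N) := by
  have h : (fun y : Fin N → ℝ => (u ⬝ᵥ y) * (w ⬝ᵥ y))
      = fun y : Fin N → ℝ => ∑ k, ∑ l, (u k * w l) * (y k * y l) := by
    funext y; exact dot2_pt u w y
  rw [h]
  apply integrable_finset_sum; intro k _
  apply integrable_finset_sum; intro l _
  exact (integrable_mono2 k l).const_mul _

lemma integrable_dot4 :
    Integrable (fun y : Fin N → ℝ => ((u ⬝ᵥ y) * (w ⬝ᵥ y)) * ((u' ⬝ᵥ y) * (w' ⬝ᵥ y)))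
      (gaussVec N) := by
  have h : (fun y : Fin N → ℝ => ((u ⬝ᵥ y) * (w ⬝ᵥ y)) * ((u' ⬝ᵥ y) * (w' ⬝ᵥ y)))
      = fun y : Fin N → ℝ => ∑ k, ∑ l, ∑ p, ∑ q,
          (u k * w p * u' l * w' q) * (y k * y l * y p * y q) := by
    funext y; exact dot4_pt u w u' w' y
  rw [h]
  apply integrable_finset_sum; intro k _
  apply integrable_finset_sum; intro l _
  apply integrable_finset_sum; intro p _
  apply integrable_finset_sum; intro q _
  exact (integrable_mono4 k l p q).const_mul _

lemma integral_dot2 :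
    ∫ y : Fin N → ℝ, (u ⬝ᵥ y) * (w ⬝ᵥ y) ∂(gaussVec N) = u ⬝ᵥ w := by
  have h : (fun y : Fin N → ℝ => (u ⬝ᵥ y) * (w ⬝ᵥ y))
      = fun y : Fin N → ℝ => ∑ k, ∑ l, (u k * w l) * (y k * y l) := by
    funext y; exact dot2_pt u w y
  rw [h]
  rw [integral_finset_sum _ (fun k _ => integrable_finset_sum _
    (fun l _ => (integrable_mono2 k l).const_mul _))]
  have : ∀ k : Fin N, ∑ l, ∫ y : Fin N → ℝ, (u k * w l) * (y k * y l) ∂(gaussVec N)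
      = u k * w k := by
    intro k
    have e : ∀ l : Fin N, ∫ y : Fin N → ℝ, (u k * w l) * (y k * y l) ∂(gaussVec N)
        = if k = l then u k * w l else 0 := by
      intro l
      rw [MeasureTheory.integral_const_mul, integral_mono2 k l]
      by_cases hkl : k = l <;> simp [hkl]
    simp_rw [e]
    rw [Finset.sum_ite_eq Finset.univ k (fun l => u k * w l)]
    simp
  rw [Finset.sum_congr rfl (fun k _ => integral_finset_sum Finset.univ
    (fun l _ => ((integrable_mono2 k l).const_mul (u k * w l))))]
  rw [Finset.sum_congr rfl (fun k _ => this k)]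
  rfl

lemma integral_dot4 :
    ∫ y : Fin N → ℝ, ((u ⬝ᵥ y) * (w ⬝ᵥ y)) * ((u' ⬝ᵥ y) * (w' ⬝ᵥ y)) ∂(gaussVec N)
      = (u ⬝ᵥ w) * (u' ⬝ᵥ w') + (u ⬝ᵥ u') * (w ⬝ᵥ w') + (u ⬝ᵥ w') * (u' ⬝ᵥ w) := by
  have h : (fun y : Fin N → ℝ => ((u ⬝ᵥ y) * (w ⬝ᵥ y)) * ((u' ⬝ᵥ y) * (w' ⬝ᵥ y)))
      = fun y : Fin N → ℝ => ∑ k, ∑ l, ∑ p, ∑ q,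
          (u k * w p * u' l * w' q) * (y k * y l * y p * y q) := by
    funext y; exact dot4_pt u w u' w' y
  rw [h]
  rw [integral_finset_sum _ (fun k _ => integrable_finset_sum _ (fun l _ =>
    integrable_finset_sum _ (fun p _ => integrable_finset_sum _
      (fun q _ => (integrable_mono4 k l p q).const_mul _))))]
  simp_rw [integral_finset_sum _ (fun l (_ : l ∈ Finset.univ) => integrable_finset_sum _
    (fun p _ => integrable_finset_sum _
      (fun q _ => (integrable_mono4 _ l p q).const_mul _)))]
  simp_rw [integral_finset_sum _ (fun p (_ : p ∈ Finset.univ) => integrable_finset_sum _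
      (fun q _ => (integrable_mono4 _ _ p q).const_mul _))]
  simp_rw [integral_finset_sum _ (fun q (_ : q ∈ Finset.univ) =>
    (integrable_mono4 _ _ _ q).const_mul _)]
  simp_rw [MeasureTheory.integral_const_mul, integral_mono4]
  simp only [mul_add, Finset.sum_add_distrib]
  have TA : (∑ k : Fin N, ∑ l : Fin N, ∑ p : Fin N, ∑ q : Fin N,
      u k * w p * u' l * w' q * ((if k = l then (1:ℝ) else 0) * if p = q then 1 else 0))
      = (u ⬝ᵥ u') * (w ⬝ᵥ w') := by
    simp only [mul_ite, mul_one, mul_zero, Finset.sum_ite_eq, Finset.mem_univ, if_true,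
      Finset.sum_const_zero, Finset.sum_ite_irrel]
    rw [dotProduct, dotProduct, Finset.sum_mul_sum]
    apply Finset.sum_congr rfl; intro k _
    apply Finset.sum_congr rfl; intro p _
    ring
  have TB : (∑ k : Fin N, ∑ l : Fin N, ∑ p : Fin N, ∑ q : Fin N,
      u k * w p * u' l * w' q * ((if k = p then (1:ℝ) else 0) * if l = q then 1 else 0))
      = (u ⬝ᵥ w) * (u' ⬝ᵥ w') := by
    simp only [mul_ite, mul_one, mul_zero, Finset.sum_ite_eq, Finset.mem_univ, if_true,
      Finset.sum_const_zero, Finset.sum_ite_irrel]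
    rw [dotProduct, dotProduct, Finset.sum_mul_sum]
    apply Finset.sum_congr rfl; intro k _
    apply Finset.sum_congr rfl; intro p _
    ring
  have TC : (∑ k : Fin N, ∑ l : Fin N, ∑ p : Fin N, ∑ q : Fin N,
      u k * w p * u' l * w' q * ((if k = q then (1:ℝ) else 0) * if l = p then 1 else 0))
      = (u ⬝ᵥ w') * (u' ⬝ᵥ w) := by
    simp only [mul_ite, mul_one, mul_zero, Finset.sum_ite_eq, Finset.mem_univ, if_true,
      Finset.sum_const_zero, Finset.sum_ite_irrel]
    rw [dotProduct, dotProduct, Finset.sum_mul_sum]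
    apply Finset.sum_congr rfl; intro k _
    apply Finset.sum_congr rfl; intro p _
    ring
  rw [TA, TB, TC]
  ring
end dot



/-- Let `ψ₁, …, ψ_m` be i.i.d. centered Gaussian vectors in `ℝ^N` with
positive-definite covariance `S` (realized as `ψᵢ = B *ᵥ Xᵢ` with `Xᵢ` i.i.d. standard
Gaussian vectors and `B * Bᵀ = S`), let `η > 0`, `Δ ∈ ℝ^N` fixed, `C = Δ Δᵀ`.  With the
one-step SGD update `Δ' = Δ − (η/m) ∑ᵢ ψᵢ (ψᵢᵀ Δ)`, the entrywise expectation
`E[Δ' Δ'ᵀ]` equals `(I − ηS) C (I − ηS) + (η²/m)[S C S + Tr(S C) • S]`. -/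
theorem sgd_one_step_error_matrix_gaussian
    (N m : ℕ) (hN : 1 ≤ N) (hm : 1 ≤ m)
    (S B : Matrix (Fin N) (Fin N) ℝ)
    (hS : S.PosDef) (hB : B * Bᵀ = S)
    (η : ℝ) (hη : 0 < η)
    (Δ : Fin N → ℝ) (C : Matrix (Fin N) (Fin N) ℝ) (hC : C = vecMulVec Δ Δ) :
    ∀ i j : Fin N,
      (∫ X : Fin m → (Fin N → ℝ),
          (Δ i - (η / m) * ∑ a, (B.mulVec (X a)) i * ((B.mulVec (X a)) ⬝ᵥ Δ)) *
          (Δ j - (η / m) * ∑ a, (B.mulVec (X a)) j * ((B.mulVec (X a)) ⬝ᵥ Δ))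
        ∂(Measure.pi fun _ : Fin m => Measure.pi fun _ : Fin N => gaussianReal 0 1))
      = ((1 - η • S) * C * (1 - η • S)
          + (η ^ 2 / m) • (S * C * S + (S * C).trace • S)) i j := by
  intro i j
  subst hC
  have hm0 : (m : ℝ) ≠ 0 := Nat.cast_ne_zero.mpr (by omega)
  have hsymm : Sᵀ = S := by rw [← hB, transpose_mul, transpose_transpose]
  set v : Fin N → ℝ := Bᵀ *ᵥ Δ with hv
  set P : Fin N → ℝ := S *ᵥ Δ with hP
  set r : Fin N → ℝ := fun k => B i k with hr
  set s : Fin N → ℝ := fun k => B j k with hs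
  -- pointwise forms
  have hdot : ∀ y : Fin N → ℝ, (B.mulVec y) ⬝ᵥ Δ = v ⬝ᵥ y := by
    intro y
    rw [dotProduct_comm, Matrix.dotProduct_mulVec, hv, ← Matrix.mulVec_transpose]
  have hri : ∀ y : Fin N → ℝ, (B.mulVec y) i = r ⬝ᵥ y := fun y => rfl
  have hsj : ∀ y : Fin N → ℝ, (B.mulVec y) j = s ⬝ᵥ y := fun y => rfl
  -- scalar identities
  have hrv : r ⬝ᵥ v = P i := by
    have : B *ᵥ v = P := by rw [hv, Matrix.mulVec_mulVec, hB]
    calc r ⬝ᵥ v = (B *ᵥ v) i := rfl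
    _ = P i := by rw [this]
  have hsv : s ⬝ᵥ v = P j := by
    have : B *ᵥ v = P := by rw [hv, Matrix.mulVec_mulVec, hB]
    calc s ⬝ᵥ v = (B *ᵥ v) j := rfl
    _ = P j := by rw [this]
  have hrs : r ⬝ᵥ s = S i j := by
    rw [← hB]
    simp [Matrix.mul_apply, dotProduct, hr, hs, Matrix.transpose_apply]
  have hvMulS : Δ ᵥ* S = P := by rw [← hsymm, Matrix.vecMul_transpose]
  have hvv : v ⬝ᵥ v = P ⬝ᵥ Δ := by
    rw [hv, Matrix.dotProduct_mulVec, Matrix.mulVec_transpose, Matrix.vecMul_vecMul, hB, hvMulS]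
  -- matrix entry identities
  have hSC : S * vecMulVec Δ Δ = vecMulVec P Δ := by
    ext a b
    rw [Matrix.mul_apply, vecMulVec_apply]
    have : P a = ∑ k, S a k * Δ k := rfl
    rw [this, Finset.sum_mul]
    apply Finset.sum_congr rfl; intro k _
    rw [vecMulVec_apply]; ring
  have hCS : vecMulVec Δ Δ * S = vecMulVec Δ P := by
    ext a b
    rw [Matrix.mul_apply, vecMulVec_apply, ← hvMulS]
    have : (Δ ᵥ* S) b = ∑ k, Δ k * S k b := rfl
    rw [this, Finset.mul_sum]
    apply Finset.sum_congr rfl; intro k _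
    rw [vecMulVec_apply]; ring
  have hSCS : S * vecMulVec Δ Δ * S = vecMulVec P P := by
    rw [hSC]
    ext a b
    rw [Matrix.mul_apply, vecMulVec_apply, ← hvMulS]
    have : (Δ ᵥ* S) b = ∑ k, Δ k * S k b := rfl
    rw [this, Finset.mul_sum]
    apply Finset.sum_congr rfl; intro k _
    rw [vecMulVec_apply]; ring
  have htr : (S * vecMulVec Δ Δ).trace = P ⬝ᵥ Δ := by
    rw [hSC]
    simp [Matrix.trace, Matrix.diag, vecMulVec_apply, dotProduct]
  have hmat : (1 - η • S) * vecMulVec Δ Δ * (1 - η • S)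
      = vecMulVec Δ Δ - η • (S * vecMulVec Δ Δ) - η • (vecMulVec Δ Δ * S)
        + (η * η) • (S * vecMulVec Δ Δ * S) := by
    simp only [sub_mul, mul_sub, one_mul, mul_one, smul_mul_assoc, mul_smul_comm, smul_smul,
      smul_sub, smul_add]
    abel
  have hRHS : ((1 - η • S) * vecMulVec Δ Δ * (1 - η • S)
        + (η ^ 2 / m) • (S * vecMulVec Δ Δ * S + (S * vecMulVec Δ Δ).trace • S)) i j
      = Δ i * Δ j - η * (P i * Δ j) - η * (Δ i * P j) + η ^ 2 * (P i * P j)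
        + (η ^ 2 / m) * (P i * P j + (P ⬝ᵥ Δ) * S i j) := by
    rw [hmat, hSCS, htr, hSC, hCS]
    simp only [Matrix.add_apply, Matrix.sub_apply, Matrix.smul_apply, vecMulVec_apply,
      smul_eq_mul]
    ring
  rw [hRHS]
  -- now the integral
  have hpt : ∀ X : Fin m → (Fin N → ℝ),
      (Δ i - (η / m) * ∑ a, (B.mulVec (X a)) i * ((B.mulVec (X a)) ⬝ᵥ Δ)) *
      (Δ j - (η / m) * ∑ a, (B.mulVec (X a)) j * ((B.mulVec (X a)) ⬝ᵥ Δ))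
      = Δ i * Δ j
        - (η / m * Δ i) * (∑ a, (s ⬝ᵥ X a) * (v ⬝ᵥ X a))
        - (η / m * Δ j) * (∑ a, (r ⬝ᵥ X a) * (v ⬝ᵥ X a))
        + (η / m) ^ 2 * (∑ a, ∑ b, ((r ⬝ᵥ X a) * (v ⬝ᵥ X a)) * ((s ⬝ᵥ X b) * (v ⬝ᵥ X b))) := by
    intro X
    simp_rw [hdot]
    simp_rw [hri]
    simp_rw [hsj]
    rw [← Finset.sum_mul_sum]
    ring
  rw [integral_congr_ae (ae_of_all _ hpt)]
  -- integrability
  have Ig : Integrable (fun X : Fin m → (Fin N → ℝ) => ∑ a, (s ⬝ᵥ X a) * (v ⬝ᵥ X a))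
      (Measure.pi fun _ : Fin m => gaussVec N) :=
    integrable_finset_sum _ (fun a _ =>
      integrable_eval (gaussVec N) a (fun y => (s ⬝ᵥ y) * (v ⬝ᵥ y)) (integrable_dot2 s v))
  have If : Integrable (fun X : Fin m → (Fin N → ℝ) => ∑ a, (r ⬝ᵥ X a) * (v ⬝ᵥ X a))
      (Measure.pi fun _ : Fin m => gaussVec N) :=
    integrable_finset_sum _ (fun a _ =>
      integrable_eval (gaussVec N) a (fun y => (r ⬝ᵥ y) * (v ⬝ᵥ y)) (integrable_dot2 r v))
  have hIab : ∀ a b : Fin m, Integrable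
      (fun X : Fin m → (Fin N → ℝ) => ((r ⬝ᵥ X a) * (v ⬝ᵥ X a)) * ((s ⬝ᵥ X b) * (v ⬝ᵥ X b)))
      (Measure.pi fun _ : Fin m => gaussVec N) := by
    intro a b
    by_cases hab : a = b
    · subst hab
      exact integrable_eval (gaussVec N) a
        (fun y => ((r ⬝ᵥ y) * (v ⬝ᵥ y)) * ((s ⬝ᵥ y) * (v ⬝ᵥ y))) (integrable_dot4 r v s v)
    · exact integrable_eval2 (gaussVec N) hab _ _ (integrable_dot2 r v) (integrable_dot2 s v)
  have Ifg : Integrable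
      (fun X : Fin m → (Fin N → ℝ) =>
        ∑ a, ∑ b, ((r ⬝ᵥ X a) * (v ⬝ᵥ X a)) * ((s ⬝ᵥ X b) * (v ⬝ᵥ X b)))
      (Measure.pi fun _ : Fin m => gaussVec N) :=
    integrable_finset_sum _ (fun a _ => integrable_finset_sum _ (fun b _ => hIab a b))
  -- split the integral
  have h1 : Integrable (fun X : Fin m → (Fin N → ℝ) =>
      Δ i * Δ j - (η / m * Δ i) * (∑ a, (s ⬝ᵥ X a) * (v ⬝ᵥ X a)))
      (Measure.pi fun _ : Fin m => gaussVec N) := (integrable_const _).sub (Ig.const_mul _)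
  have h2 : Integrable (fun X : Fin m → (Fin N → ℝ) =>
      Δ i * Δ j - (η / m * Δ i) * (∑ a, (s ⬝ᵥ X a) * (v ⬝ᵥ X a))
        - (η / m * Δ j) * (∑ a, (r ⬝ᵥ X a) * (v ⬝ᵥ X a)))
      (Measure.pi fun _ : Fin m => gaussVec N) := h1.sub (If.const_mul _)
  rw [integral_add h2 (Ifg.const_mul _), integral_sub h1 (If.const_mul _),
    integral_sub (integrable_const _) (Ig.const_mul _),
    integral_const, MeasureTheory.integral_const_mul, MeasureTheory.integral_const_mul,
    MeasureTheory.integral_const_mul]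
  -- compute the three integrals
  have EG : ∫ X : Fin m → (Fin N → ℝ), (∑ a, (s ⬝ᵥ X a) * (v ⬝ᵥ X a))
      ∂(Measure.pi fun _ : Fin m => gaussVec N) = (m : ℝ) * P j := by
    rw [integral_finset_sum _ (fun a _ =>
      integrable_eval (gaussVec N) a (fun y => (s ⬝ᵥ y) * (v ⬝ᵥ y)) (integrable_dot2 s v))]
    rw [Finset.sum_congr rfl (fun a _ => by
      rw [integral_eval (gaussVec N) a (fun y => (s ⬝ᵥ y) * (v ⬝ᵥ y)), integral_dot2, hsv])]
    rw [Finset.sum_const, Finset.card_univ, Fintype.card_fin, nsmul_eq_mul]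
  have EF : ∫ X : Fin m → (Fin N → ℝ), (∑ a, (r ⬝ᵥ X a) * (v ⬝ᵥ X a))
      ∂(Measure.pi fun _ : Fin m => gaussVec N) = (m : ℝ) * P i := by
    rw [integral_finset_sum _ (fun a _ =>
      integrable_eval (gaussVec N) a (fun y => (r ⬝ᵥ y) * (v ⬝ᵥ y)) (integrable_dot2 r v))]
    rw [Finset.sum_congr rfl (fun a _ => by
      rw [integral_eval (gaussVec N) a (fun y => (r ⬝ᵥ y) * (v ⬝ᵥ y)), integral_dot2, hrv])]
    rw [Finset.sum_const, Finset.card_univ, Fintype.card_fin, nsmul_eq_mul]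
  have hEab : ∀ a b : Fin m, ∫ X : Fin m → (Fin N → ℝ),
      ((r ⬝ᵥ X a) * (v ⬝ᵥ X a)) * ((s ⬝ᵥ X b) * (v ⬝ᵥ X b))
      ∂(Measure.pi fun _ : Fin m => gaussVec N)
      = if a = b then 2 * (P i * P j) + S i j * (P ⬝ᵥ Δ) else P i * P j := by
    intro a b
    by_cases hab : a = b
    · subst hab
      rw [if_pos rfl]
      rw [integral_eval (gaussVec N) a
        (fun y => ((r ⬝ᵥ y) * (v ⬝ᵥ y)) * ((s ⬝ᵥ y) * (v ⬝ᵥ y))), integral_dot4,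
        hrv, hsv, hrs, hvv]
      ring
    · rw [if_neg hab, integral_eval2 (gaussVec N) hab
        (fun y => (r ⬝ᵥ y) * (v ⬝ᵥ y)) (fun y => (s ⬝ᵥ y) * (v ⬝ᵥ y)),
        integral_dot2, integral_dot2, hrv, hsv]
  have EFG : ∫ X : Fin m → (Fin N → ℝ),
      (∑ a, ∑ b, ((r ⬝ᵥ X a) * (v ⬝ᵥ X a)) * ((s ⬝ᵥ X b) * (v ⬝ᵥ X b)))
      ∂(Measure.pi fun _ : Fin m => gaussVec N)
      = (m : ℝ) * ((m : ℝ) * (P i * P j)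
          + (2 * (P i * P j) + S i j * (P ⬝ᵥ Δ) - P i * P j)) := by
    rw [integral_finset_sum _ (fun a _ => integrable_finset_sum _ (fun b _ => hIab a b))]
    rw [Finset.sum_congr rfl (fun a _ => integral_finset_sum _ (fun b _ => hIab a b))]
    rw [Finset.sum_congr rfl (fun a _ => Finset.sum_congr rfl (fun b _ => hEab a b))]
    have hrow : ∀ a : Fin m,
        (∑ b : Fin m, if a = b then 2 * (P i * P j) + S i j * (P ⬝ᵥ Δ) else P i * P j)
        = (m : ℝ) * (P i * P j) + (2 * (P i * P j) + S i j * (P ⬝ᵥ Δ) - P i * P j) := by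
      intro a
      rw [Finset.sum_congr rfl (fun b _ =>
        show (if a = b then 2 * (P i * P j) + S i j * (P ⬝ᵥ Δ) else P i * P j)
          = P i * P j
            + (if a = b then 2 * (P i * P j) + S i j * (P ⬝ᵥ Δ) - P i * P j else 0) from by
        by_cases hab : a = b <;> simp [hab])]
      rw [Finset.sum_add_distrib, Finset.sum_const, Finset.card_univ, Fintype.card_fin,
        nsmul_eq_mul, Finset.sum_ite_eq, if_pos (Finset.mem_univ a)]
    rw [Finset.sum_congr rfl (fun a _ => hrow a)]
    rw [Finset.sum_const, Finset.card_univ, Fintype.card_fin, nsmul_eq_mul]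
  rw [EG, EF, EFG]
  have : (Measure.pi fun _ : Fin m => gaussVec N).real Set.univ = 1 := by
    simp [measure_univ]
  rw [this]
  field_simp
  ring
end

section
/- Let Σ = Σ_k λ_k u_k u_kᵀ ∈ ℝ^{N×N} with u₁,…,u_N an orthonormal basis of ℝ^N and λ_k ≥ 0; let η > 0 and m > 0. Suppose the matrix sequence (C_t)_{t∈ℕ} satisfies C_{t+1} = (I − ηΣ) C_t (I − ηΣ) + (η²/m)[Σ C_t Σ + Σ · Tr(Σ C_t)] with C₀ = Δ Δᵀ for some Δ ∈ ℝ^N, and set v_k = u_kᵀ Δ. Then for all t ∈ ℕ, Tr(Σ C_t) = λᵀ A(λ,η,m)^t v², where v² is the entrywise square of v = (v₁,…,v_N). -/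
open Matrix

/-- The matrix `A(λ,η,m) = (I − η diag(λ))² + (η²/m) diag(λ²) + (η²/m) λλᵀ`. -/
noncomputable def Amat (N : ℕ) (lam : Fin N → ℝ) (η m : ℝ) : Matrix (Fin N) (Fin N) ℝ :=
  (1 - η • Matrix.diagonal lam) ^ 2 + (η ^ 2 / m) • Matrix.diagonal (fun k => (lam k) ^ 2)
    + (η ^ 2 / m) • vecMulVec lam lam

lemma Amat_mulVec (N : ℕ) (lam : Fin N → ℝ) (η m : ℝ) (w : Fin N → ℝ) (k : Fin N) :
    (Amat N lam η m).mulVec w k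
      = (1 - η * lam k) ^ 2 * w k + (η ^ 2 / m) * ((lam k) ^ 2 * w k)
          + (η ^ 2 / m) * (lam k * (lam ⬝ᵥ w)) := by
  have hdiag : (1 - η • Matrix.diagonal lam : Matrix (Fin N) (Fin N) ℝ)
      = Matrix.diagonal (fun j => 1 - η * lam j) := by
    rw [← Matrix.diagonal_one, ← Matrix.diagonal_smul, ← Matrix.diagonal_sub]
    rfl
  have hsq : ((1 - η • Matrix.diagonal lam : Matrix (Fin N) (Fin N) ℝ)) ^ 2
      = Matrix.diagonal (fun j => (1 - η * lam j) ^ 2) := by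
    rw [hdiag, sq, Matrix.diagonal_mul_diagonal]
    have : (fun i => (1 - η * lam i) * (1 - η * lam i)) = fun j => (1 - η * lam j) ^ 2 :=
      funext fun j => by ring
    rw [this]
  have hvmv : (vecMulVec lam lam).mulVec w k = lam k * (lam ⬝ᵥ w) := by
    simp only [Matrix.mulVec, Matrix.vecMulVec_apply, dotProduct, Finset.mul_sum]
    exact Finset.sum_congr rfl fun i _ => by ring
  unfold Amat
  rw [Matrix.add_mulVec, Matrix.add_mulVec, hsq]
  simp only [Matrix.smul_mulVec, Pi.add_apply, Pi.smul_apply, smul_eq_mul,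
    Matrix.mulVec_diagonal, hvmv]

/-- Let `S = ∑ₖ λₖ uₖ uₖᵀ` with `u₁,…,u_N` orthonormal and `λₖ ≥ 0`;
let `η > 0`, `m > 0`.  If `C_{t+1} = (I − ηS) C_t (I − ηS) + (η²/m)[S C_t S + Tr(S C_t) S]`
with `C₀ = Δ Δᵀ` and `vₖ = uₖᵀ Δ`, then `Tr(S C_t) = λᵀ A(λ,η,m)^t v²` for all `t`. -/
theorem sgd_test_loss_gaussian
    (N : ℕ) (hN : 1 ≤ N) (u : Fin N → (Fin N → ℝ))
    (hu : ∀ k l, u k ⬝ᵥ u l = if k = l then (1 : ℝ) else 0)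
    (lam : Fin N → ℝ) (hlam : ∀ k, 0 ≤ lam k)
    (S : Matrix (Fin N) (Fin N) ℝ)
    (hS : S = ∑ k, lam k • vecMulVec (u k) (u k))
    (η m : ℝ) (hη : 0 < η) (hm : 0 < m)
    (Δ : Fin N → ℝ) (C : ℕ → Matrix (Fin N) (Fin N) ℝ)
    (hC0 : C 0 = vecMulVec Δ Δ)
    (hrec : ∀ t, C (t + 1) = (1 - η • S) * C t * (1 - η • S)
        + (η ^ 2 / m) • (S * C t * S + (S * C t).trace • S)) :
    ∀ t, (S * C t).trace
      = lam ⬝ᵥ ((Amat N lam η m) ^ t).mulVec (fun k => (u k ⬝ᵥ Δ) ^ 2) := by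
  set v2 : Fin N → ℝ := fun k => (u k ⬝ᵥ Δ) ^ 2 with hv2
  set d : ℕ → Fin N → ℝ := fun t k => u k ⬝ᵥ (C t).mulVec (u k) with hd
  -- S acts on the u_k as eigenvectors
  have hSmul : ∀ k, S.mulVec (u k) = lam k • u k := by
    intro k
    funext i
    rw [hS]
    simp only [Matrix.mulVec, dotProduct, Matrix.sum_apply, Matrix.smul_apply,
      Matrix.vecMulVec_apply, smul_eq_mul, Finset.sum_mul]
    rw [Finset.sum_comm]
    have : ∀ l, ∑ j, lam l * (u l i * u l j) * u k j
        = lam l * u l i * (u l ⬝ᵥ u k) := by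
      intro l
      simp only [dotProduct, Finset.mul_sum]
      exact Finset.sum_congr rfl fun j _ => by ring
    rw [Finset.sum_congr rfl fun l _ => this l]
    simp only [hu, mul_ite, mul_one, mul_zero]
    rw [Finset.sum_ite_eq' Finset.univ k (fun l => lam l * u l i)]
    simp [Pi.smul_apply, smul_eq_mul]
  have hSsym : Sᵀ = S := by
    rw [hS]
    ext i j
    simp only [Matrix.transpose_apply, Matrix.sum_apply, Matrix.smul_apply,
      Matrix.vecMulVec_apply, smul_eq_mul]
    exact Finset.sum_congr rfl fun k _ => by ring
  have hSvec : ∀ k, u k ᵥ* S = lam k • u k := by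
    intro k
    rw [← Matrix.mulVec_transpose, hSsym]
    exact hSmul k
  have hBmul : ∀ k, (1 - η • S).mulVec (u k) = (1 - η * lam k) • u k := by
    intro k
    rw [Matrix.sub_mulVec, Matrix.one_mulVec, Matrix.smul_mulVec, hSmul]
    funext i
    simp only [Pi.sub_apply, Pi.smul_apply, smul_eq_mul]
    ring
  have hBvec : ∀ k, u k ᵥ* (1 - η • S) = (1 - η * lam k) • u k := by
    intro k
    have h1 : ((1 : Matrix (Fin N) (Fin N) ℝ) - η • S)ᵀ = 1 - η • S := by
      simp [Matrix.transpose_sub, Matrix.transpose_smul, hSsym]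
    rw [← Matrix.mulVec_transpose, h1]
    exact hBmul k
  have huu : ∀ k, u k ⬝ᵥ u k = 1 := fun k => by simp [hu k k]
  -- trace identity
  have htr : ∀ t, (S * C t).trace = lam ⬝ᵥ d t := by
    intro t
    rw [hS, Finset.sum_mul, Matrix.trace_sum]
    simp only [smul_mul_assoc, Matrix.trace_smul, smul_eq_mul]
    refine Finset.sum_congr rfl fun k _ => ?_
    congr 1
    simp only [Matrix.trace, Matrix.diag_apply, Matrix.mul_apply, Matrix.vecMulVec_apply,
      hd, dotProduct, Matrix.mulVec]
    rw [Finset.sum_comm]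
    refine Finset.sum_congr rfl fun i _ => ?_
    simp only [dotProduct, Finset.mul_sum]
    exact Finset.sum_congr rfl fun j _ => by ring
  -- recursion for d
  have hdrec : ∀ t, d (t + 1) = (Amat N lam η m).mulVec (d t) := by
    intro t
    funext k
    have e1 : u k ⬝ᵥ ((1 - η • S) * C t * (1 - η • S)).mulVec (u k)
        = (1 - η * lam k) ^ 2 * d t k := by
      rw [← Matrix.mulVec_mulVec, ← Matrix.mulVec_mulVec, hBmul,
        Matrix.mulVec_smul, Matrix.mulVec_smul, dotProduct_smul,
        Matrix.dotProduct_mulVec, hBvec]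
      simp only [smul_dotProduct, smul_eq_mul, hd]
      ring
    have e2 : u k ⬝ᵥ (S * C t * S).mulVec (u k) = lam k ^ 2 * d t k := by
      rw [← Matrix.mulVec_mulVec, ← Matrix.mulVec_mulVec, hSmul,
        Matrix.mulVec_smul, Matrix.mulVec_smul, dotProduct_smul,
        Matrix.dotProduct_mulVec, hSvec]
      simp only [smul_dotProduct, smul_eq_mul, hd]
      ring
    have e3 : u k ⬝ᵥ S.mulVec (u k) = lam k := by
      rw [hSmul, dotProduct_smul, smul_eq_mul, huu, mul_one]
    calc d (t + 1) k = u k ⬝ᵥ (C (t + 1)).mulVec (u k) := rfl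
      _ = (1 - η * lam k) ^ 2 * d t k
            + (η ^ 2 / m) * (lam k ^ 2 * d t k + (lam ⬝ᵥ d t) * lam k) := by
          rw [hrec t, Matrix.add_mulVec, dotProduct_add, e1,
            Matrix.smul_mulVec, dotProduct_smul, smul_eq_mul,
            Matrix.add_mulVec, dotProduct_add, e2,
            Matrix.smul_mulVec, dotProduct_smul, smul_eq_mul, e3, ← htr t]
      _ = (Amat N lam η m).mulVec (d t) k := by
          rw [Amat_mulVec]
          ring
  -- closed form for d
  have hdt : ∀ t, d t = ((Amat N lam η m) ^ t).mulVec v2 := by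
    intro t
    induction t with
    | zero =>
      funext k
      simp only [pow_zero, Matrix.one_mulVec]
      have hv : (vecMulVec Δ Δ).mulVec (u k) = (Δ ⬝ᵥ u k) • Δ := by
        funext i
        simp only [Matrix.mulVec, Matrix.vecMulVec_apply, dotProduct, Pi.smul_apply,
          smul_eq_mul, Finset.sum_mul]
        exact Finset.sum_congr rfl fun j _ => by ring
      show u k ⬝ᵥ (C 0).mulVec (u k) = v2 k
      rw [hC0, hv, dotProduct_smul, smul_eq_mul, dotProduct_comm Δ (u k), hv2]
      ring
    | succ t ih =>
      rw [hdrec t, ih, Matrix.mulVec_mulVec, ← pow_succ']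
  intro t
  rw [htr t, hdt t]
end

section
/- Let Σ = Σ_k λ_k u_k u_kᵀ ∈ ℝ^{N×N} with u₁,…,u_N an orthonormal basis of ℝ^N and λ_k ≥ 0; let η > 0 and m > 0. Suppose the matrix sequence (C_t)_{t∈ℕ} satisfies C_{t+1} = (I − ηΣ) C_t (I − ηΣ) + (η²/m)[Σ C_t Σ + Σ · Tr(Σ C_t)] with C₀ = Δ Δᵀ for some Δ ∈ ℝ^N, and set v_k = u_kᵀ Δ. Then for all k ≠ l and all t ∈ ℕ, u_kᵀ C_t u_l = (1 − ηλ_k − ηλ_l + η²(1 + 1/m) λ_k λ_l)^t · v_k v_l. -/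
open Matrix

/-- Let `S = ∑ₖ λₖ uₖ uₖᵀ` with `u₁,…,u_N` orthonormal and `λₖ ≥ 0`;
let `η > 0`, `m > 0`.  If `C_{t+1} = (I − ηS) C_t (I − ηS) + (η²/m)[S C_t S + Tr(S C_t) S]`
with `C₀ = Δ Δᵀ` and `vₖ = uₖᵀ Δ`, then for all `k ≠ l` and all `t`,
`uₖᵀ C_t uₗ = (1 − ηλₖ − ηλₗ + η²(1 + 1/m) λₖ λₗ)^t · vₖ vₗ`. -/
theorem sgd_off_diagonal_evolution
    (N : ℕ) (hN : 1 ≤ N) (u : Fin N → (Fin N → ℝ))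
    (hu : ∀ k l, u k ⬝ᵥ u l = if k = l then (1 : ℝ) else 0)
    (lam : Fin N → ℝ) (hlam : ∀ k, 0 ≤ lam k)
    (S : Matrix (Fin N) (Fin N) ℝ)
    (hS : S = ∑ k, lam k • vecMulVec (u k) (u k))
    (η m : ℝ) (hη : 0 < η) (hm : 0 < m)
    (Δ : Fin N → ℝ) (C : ℕ → Matrix (Fin N) (Fin N) ℝ)
    (hC0 : C 0 = vecMulVec Δ Δ)
    (hrec : ∀ t, C (t + 1) = (1 - η • S) * C t * (1 - η • S)
        + (η ^ 2 / m) • (S * C t * S + (S * C t).trace • S)) :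
    ∀ k l, k ≠ l → ∀ t : ℕ,
      u k ⬝ᵥ (C t).mulVec (u l)
        = (1 - η * lam k - η * lam l + η ^ 2 * (1 + 1 / m) * lam k * lam l) ^ t
            * ((u k ⬝ᵥ Δ) * (u l ⬝ᵥ Δ)) := by
  -- S acts on the eigenvectors on the right
  have hSv : ∀ j, S *ᵥ u j = lam j • u j := by
    intro j
    subst hS
    ext i
    simp only [Matrix.mulVec, dotProduct, Matrix.sum_apply, vecMulVec_apply,
      Matrix.smul_apply, smul_eq_mul, Finset.sum_mul, Pi.smul_apply]
    rw [Finset.sum_comm]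
    have h1 : ∀ p : Fin N, ∑ x, lam p * (u p i * u p x) * u j x
        = lam p * u p i * (u p ⬝ᵥ u j) := by
      intro p; simp [dotProduct, Finset.mul_sum, mul_assoc]
    simp_rw [h1, hu]
    simp
  -- S acts on the eigenvectors on the left
  have hvS : ∀ j, u j ᵥ* S = lam j • u j := by
    intro j
    subst hS
    ext i
    simp only [Matrix.vecMul, dotProduct, Matrix.sum_apply, vecMulVec_apply,
      Matrix.smul_apply, smul_eq_mul, Pi.smul_apply]
    have h1 : ∀ x : Fin N, ∑ p, lam p * (u p x * u p i)
        = ∑ p, lam p * u p i * u p x := by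
      intro x; exact Finset.sum_congr rfl fun p _ => by ring
    simp_rw [h1, Finset.mul_sum]
    rw [Finset.sum_comm]
    have h2 : ∀ p : Fin N, ∑ x, u j x * (lam p * u p i * u p x)
        = lam p * u p i * (u j ⬝ᵥ u p) := by
      intro p; simp [dotProduct, Finset.mul_sum]; exact Finset.sum_congr rfl fun x _ => by ring
    simp_rw [h2, hu]
    simp
  intro k l hkl t
  induction t with
  | zero =>
    rw [hC0]
    have : vecMulVec Δ Δ *ᵥ u l = (Δ ⬝ᵥ u l) • Δ := by
      ext i
      simp only [Matrix.mulVec, dotProduct, vecMulVec_apply, Pi.smul_apply, smul_eq_mul]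
      rw [Finset.sum_mul]
      exact Finset.sum_congr rfl fun x _ => by ring
    rw [this]
    simp [dotProduct_smul, dotProduct_comm Δ (u l)]
    ring
  | succ t ih =>
    rw [hrec t]
    have hright : (1 - η • S) *ᵥ u l = (1 - η * lam l) • u l := by
      rw [Matrix.sub_mulVec, Matrix.one_mulVec, Matrix.smul_mulVec, hSv]
      ext i; simp; ring
    have hleft : u k ᵥ* (1 - η • S) = (1 - η * lam k) • u k := by
      rw [Matrix.vecMul_sub, Matrix.vecMul_one]
      have hsm : u k ᵥ* (η • S) = η • (u k ᵥ* S) := by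
        ext i
        simp [Matrix.vecMul, dotProduct, Finset.mul_sum]
        exact Finset.sum_congr rfl fun x _ => by ring
      rw [hsm, hvS]
      ext i; simp; ring
    have hkl0 : u k ⬝ᵥ u l = 0 := by rw [hu]; simp [hkl]
    have hT1 : u k ⬝ᵥ ((1 - η • S) * C t * (1 - η • S)) *ᵥ u l
        = (1 - η * lam k) * (1 - η * lam l) * (u k ⬝ᵥ C t *ᵥ u l) := by
      rw [Matrix.mul_assoc, ← Matrix.mulVec_mulVec, ← Matrix.mulVec_mulVec, hright,
        Matrix.mulVec_smul, Matrix.mulVec_smul, dotProduct_smul,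
        dotProduct_mulVec, hleft, smul_dotProduct]
      simp [smul_eq_mul]; ring
    have hT2 : u k ⬝ᵥ (S * C t * S) *ᵥ u l = lam k * lam l * (u k ⬝ᵥ C t *ᵥ u l) := by
      rw [Matrix.mul_assoc, ← Matrix.mulVec_mulVec, ← Matrix.mulVec_mulVec, hSv,
        Matrix.mulVec_smul, Matrix.mulVec_smul, dotProduct_smul,
        dotProduct_mulVec, hvS, smul_dotProduct]
      simp [smul_eq_mul]; ring
    have hT3 : u k ⬝ᵥ S *ᵥ u l = 0 := by
      rw [hSv, dotProduct_smul, hkl0]; simp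
    rw [Matrix.add_mulVec, dotProduct_add, Matrix.smul_mulVec, dotProduct_smul,
      Matrix.add_mulVec, dotProduct_add, Matrix.smul_mulVec, dotProduct_smul,
      hT1, hT2, hT3, ih]
    have hm' : m ≠ 0 := ne_of_gt hm
    rw [pow_succ]
    field_simp
    ring_nf
    simp only [mul_inv_cancel_right₀ hm', mul_inv_cancel₀ hm']
    ring
end

section
/- Let N ≥ 1, let λ ∈ ℝ^N have all entries in [0,1], let η ∈ (0,1], let v ∈ ℝ^N with λᵀ v² > 0, and let m > 0 satisfy m < η ‖λ‖² / (2 − η), where ‖λ‖² = Σ_k λ_k². Then λᵀ A(λ,η,m)^t v² → ∞ as t → ∞; that is, the expected SGD test loss diverges. -/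
open Matrix Filter

/-- If all entries of `λ` lie in `[0,1]`, `η ∈ (0,1]`, `λᵀ v² > 0`, and the
batch size satisfies `0 < m < η ‖λ‖² / (2 − η)` with `‖λ‖² = ∑ₖ λₖ²`, then the expected SGD
test loss `λᵀ A(λ,η,m)^t v²` diverges to `∞` as `t → ∞`. -/
theorem sgd_instability
    (N : ℕ) (hN : 1 ≤ N) (lam : Fin N → ℝ) (hlam : ∀ k, lam k ∈ Set.Icc (0 : ℝ) 1)
    (η : ℝ) (hη : η ∈ Set.Ioc (0 : ℝ) 1)
    (v : Fin N → ℝ) (hv : 0 < lam ⬝ᵥ fun k => (v k) ^ 2)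
    (m : ℝ) (hm : 0 < m) (hm' : m < η * (∑ k, (lam k) ^ 2) / (2 - η)) :
    Tendsto (fun t : ℕ => lam ⬝ᵥ ((Amat N lam η m) ^ t).mulVec (fun k => (v k) ^ 2))
      atTop atTop := by
  obtain ⟨hη0, hη1⟩ := hη
  set w : Fin N → ℝ := fun k => (v k) ^ 2 with hw
  set S : ℝ := ∑ k, (lam k) ^ 2 with hS
  set c : ℝ := η ^ 2 / m with hc
  have hc0 : 0 ≤ c := by positivity
  set ρ : ℝ := (1 - η) ^ 2 + c * S with hρdef
  have h2η : 0 < 2 - η := by linarith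
  have hρ : 1 < ρ := by
    have hmm : m * (2 - η) < η * S := by
      have := (lt_div_iff₀ h2η).mp hm'
      linarith
    have hcm : c * m = η ^ 2 := by
      rw [hc]; field_simp
    have hcs : c * S * m = η ^ 2 * S := by rw [hc]; field_simp
    have h3 : η * (2 - η) < c * S := by
      rw [← mul_lt_mul_iff_of_pos_right hm]
      nlinarith [mul_lt_mul_of_pos_left hmm hη0, hcs]
    rw [hρdef]
    nlinarith [h3]
  -- mulVec formula for Amat
  have hA : ∀ u : Fin N → ℝ, (Amat N lam η m) *ᵥ u = fun i =>
      ((1 - η * lam i) ^ 2 + c * (lam i) ^ 2) * u i + c * lam i * (lam ⬝ᵥ u) := by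
    intro u
    funext i
    have h1 : (1 - η • Matrix.diagonal lam : Matrix (Fin N) (Fin N) ℝ)
        = Matrix.diagonal (fun i => 1 - η * lam i) := by
      rw [← Matrix.diagonal_one, ← Matrix.diagonal_smul, ← Matrix.diagonal_sub]
      rfl
    have h2 : (vecMulVec lam lam *ᵥ u) i = lam i * (lam ⬝ᵥ u) := by
      simp [mulVec, dotProduct, vecMulVec_apply, Finset.mul_sum, mul_assoc]
    simp [Amat, h1, Matrix.add_mulVec, Matrix.smul_mulVec, Matrix.diagonal_pow,
      mulVec_diagonal, h2, hc]
    ring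
  -- key one-step lemma
  have key : ∀ u : Fin N → ℝ, (∀ i, 0 ≤ u i) →
      (∀ i, 0 ≤ ((Amat N lam η m) *ᵥ u) i) ∧
        ρ * (lam ⬝ᵥ u) ≤ lam ⬝ᵥ ((Amat N lam η m) *ᵥ u) := by
    intro u hu
    have hP : 0 ≤ lam ⬝ᵥ u :=
      Finset.sum_nonneg fun i _ => mul_nonneg (hlam i).1 (hu i)
    constructor
    · intro i
      rw [hA]
      exact add_nonneg
        (mul_nonneg (add_nonneg (sq_nonneg _) (mul_nonneg hc0 (sq_nonneg _))) (hu i))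
        (mul_nonneg (mul_nonneg hc0 (hlam i).1) hP)
    · rw [hA]
      have expand : (lam ⬝ᵥ fun i => ((1 - η * lam i) ^ 2 + c * (lam i) ^ 2) * u i
            + c * lam i * (lam ⬝ᵥ u))
          = (∑ i, lam i * (((1 - η * lam i) ^ 2 + c * (lam i) ^ 2) * u i))
            + c * S * (lam ⬝ᵥ u) := by
        set P := lam ⬝ᵥ u with hPdef
        simp only [dotProduct, mul_add, Finset.sum_add_distrib]
        congr 1
        calc ∑ i, lam i * (c * lam i * P) = ∑ i, c * P * (lam i) ^ 2 :=
              Finset.sum_congr rfl fun i _ => by ring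
          _ = c * S * P := by rw [hS, ← Finset.mul_sum]; ring
      rw [expand]
      have hterm : ∀ i ∈ Finset.univ, (1 - η) ^ 2 * (lam i * u i)
          ≤ lam i * (((1 - η * lam i) ^ 2 + c * (lam i) ^ 2) * u i) := by
        intro i _
        have h01 := hlam i
        have h1 : (1 - η) ≤ 1 - η * lam i := by nlinarith [h01.1, h01.2]
        have h0 : (0:ℝ) ≤ 1 - η := by linarith
        have hd : (1 - η) ^ 2 ≤ (1 - η * lam i) ^ 2 + c * (lam i) ^ 2 := by
          have := pow_le_pow_left₀ h0 h1 2
          nlinarith [mul_nonneg hc0 (sq_nonneg (lam i))]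
        have hlu : 0 ≤ lam i * u i := mul_nonneg h01.1 (hu i)
        nlinarith [mul_le_mul_of_nonneg_right hd hlu]
      have hsum : (1 - η) ^ 2 * (lam ⬝ᵥ u)
          ≤ ∑ i, lam i * (((1 - η * lam i) ^ 2 + c * (lam i) ^ 2) * u i) := by
        calc (1 - η) ^ 2 * (lam ⬝ᵥ u) = ∑ i, (1 - η) ^ 2 * (lam i * u i) := by
              rw [dotProduct, Finset.mul_sum]
          _ ≤ _ := Finset.sum_le_sum hterm
      rw [hρdef, add_mul]
      linarith [hsum]
  -- induction
  have hw0 : ∀ i, 0 ≤ w i := fun i => sq_nonneg (v i)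
  have main : ∀ t : ℕ, (∀ i, 0 ≤ (((Amat N lam η m) ^ t) *ᵥ w) i) ∧
      ρ ^ t * (lam ⬝ᵥ w) ≤ lam ⬝ᵥ (((Amat N lam η m) ^ t) *ᵥ w) := by
    intro t
    induction t with
    | zero => simp [hw0]
    | succ t ih =>
      have hstep := key _ ih.1
      have hpow : ((Amat N lam η m) ^ (t + 1)) *ᵥ w
          = (Amat N lam η m) *ᵥ (((Amat N lam η m) ^ t) *ᵥ w) := by
        rw [pow_succ', mulVec_mulVec]
      rw [hpow]
      refine ⟨hstep.1, ?_⟩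
      calc ρ ^ (t + 1) * (lam ⬝ᵥ w) = ρ * (ρ ^ t * (lam ⬝ᵥ w)) := by ring
        _ ≤ ρ * (lam ⬝ᵥ (((Amat N lam η m) ^ t) *ᵥ w)) :=
            mul_le_mul_of_nonneg_left ih.2 (by linarith)
        _ ≤ _ := hstep.2
  have hlim : Tendsto (fun t : ℕ => ρ ^ t * (lam ⬝ᵥ w)) atTop atTop :=
    (tendsto_pow_atTop_atTop_of_one_lt hρ).atTop_mul_const hv
  exact tendsto_atTop_mono (fun t => (main t).2) hlim
end

section
/- Let N ≥ 1, let λ ∈ ℝ^N have nonnegative entries, let η ≥ 0, and let 0 < m₁ ≤ m₂ be real batch sizes. Then for every v ∈ ℝ^N and every t ∈ ℕ, λᵀ A(λ,η,m₂)^t v² ≤ λᵀ A(λ,η,m₁)^t v². That is, at any fixed number of steps t, increasing the batch size can only decrease the expected test loss. -/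
open Matrix

lemma Amat_apply (N : ℕ) (lam : Fin N → ℝ) (η m : ℝ) (i j : Fin N) :
    Amat N lam η m i j =
      (if i = j then (1 - η * lam i) ^ 2 + (η ^ 2 / m) * (lam i) ^ 2 else 0)
        + (η ^ 2 / m) * (lam i * lam j) := by
  have h1 : (1 : Matrix (Fin N) (Fin N) ℝ) - η • Matrix.diagonal lam
      = Matrix.diagonal (fun k => 1 - η * lam k) := by
    rw [← Matrix.diagonal_one, ← Matrix.diagonal_smul, ← Matrix.diagonal_sub]
    rfl
  have h2 : ((1 : Matrix (Fin N) (Fin N) ℝ) - η • Matrix.diagonal lam) ^ 2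
      = Matrix.diagonal (fun k => (1 - η * lam k) ^ 2) := by
    rw [h1, sq, Matrix.diagonal_mul_diagonal]
    exact congrArg Matrix.diagonal (funext fun k => by ring)
  simp only [Amat, h2, Matrix.add_apply, Matrix.smul_apply, Matrix.diagonal_apply,
    Matrix.vecMulVec_apply, smul_eq_mul]
  by_cases h : i = j <;> simp [h] <;> ring

lemma Amat_nonneg (N : ℕ) (lam : Fin N → ℝ) (hlam : ∀ k, 0 ≤ lam k)
    (η m : ℝ) (hm : 0 < m) (i j : Fin N) : 0 ≤ Amat N lam η m i j := by
  rw [Amat_apply]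
  have hc : 0 ≤ η ^ 2 / m := div_nonneg (sq_nonneg _) hm.le
  have h2 : 0 ≤ (η ^ 2 / m) * (lam i * lam j) :=
    mul_nonneg hc (mul_nonneg (hlam i) (hlam j))
  by_cases h : i = j
  · subst h
    rw [if_pos rfl]
    have : 0 ≤ (η ^ 2 / m) * (lam i) ^ 2 := mul_nonneg hc (sq_nonneg _)
    have h0 : 0 ≤ (1 - η * lam i) ^ 2 := sq_nonneg _
    linarith
  · simp only [h, if_neg h]
    simpa using h2

lemma Amat_mono (N : ℕ) (lam : Fin N → ℝ) (hlam : ∀ k, 0 ≤ lam k)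
    (η m₁ m₂ : ℝ) (hm₁ : 0 < m₁) (hm : m₁ ≤ m₂) (i j : Fin N) :
    Amat N lam η m₂ i j ≤ Amat N lam η m₁ i j := by
  rw [Amat_apply, Amat_apply]
  have hc : η ^ 2 / m₂ ≤ η ^ 2 / m₁ :=
    div_le_div_of_nonneg_left (sq_nonneg _) hm₁ hm
  refine add_le_add ?_ (mul_le_mul_of_nonneg_right hc (mul_nonneg (hlam i) (hlam j)))
  by_cases h : i = j
  · simp only [if_pos h]
    exact add_le_add le_rfl (mul_le_mul_of_nonneg_right hc (sq_nonneg _))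
  · simp [h]

lemma pow_entry_le (N : ℕ) (A B : Matrix (Fin N) (Fin N) ℝ)
    (hA : ∀ i j, 0 ≤ A i j) (hAB : ∀ i j, A i j ≤ B i j) (t : ℕ) :
    (∀ i j, 0 ≤ (A ^ t) i j) ∧ (∀ i j, (A ^ t) i j ≤ (B ^ t) i j) := by
  induction t with
  | zero =>
    constructor <;> intro i j <;> simp [Matrix.one_apply] <;> positivity
  | succ n ih =>
    obtain ⟨ih1, ih2⟩ := ih
    constructor
    · intro i j
      rw [pow_succ, Matrix.mul_apply]
      exact Finset.sum_nonneg fun k _ => mul_nonneg (ih1 i k) (hA k j)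
    · intro i j
      rw [pow_succ, pow_succ, Matrix.mul_apply, Matrix.mul_apply]
      refine Finset.sum_le_sum fun k _ => ?_
      exact mul_le_mul (ih2 i k) (hAB k j) (hA k j) (le_trans (ih1 i k) (ih2 i k))

/-- For `λ` with nonnegative entries, `η ≥ 0`, and batch sizes
`0 < m₁ ≤ m₂`, for every `v` and every `t`,
`λᵀ A(λ,η,m₂)^t v² ≤ λᵀ A(λ,η,m₁)^t v²`: increasing the batch size at fixed `t` can only
decrease the expected test loss. -/
theorem batch_size_monotonicity
    (N : ℕ) (hN : 1 ≤ N) (lam : Fin N → ℝ) (hlam : ∀ k, 0 ≤ lam k)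
    (η : ℝ) (hη : 0 ≤ η)
    (m₁ m₂ : ℝ) (hm₁ : 0 < m₁) (hm : m₁ ≤ m₂)
    (v : Fin N → ℝ) (t : ℕ) :
    lam ⬝ᵥ ((Amat N lam η m₂) ^ t).mulVec (fun k => (v k) ^ 2)
      ≤ lam ⬝ᵥ ((Amat N lam η m₁) ^ t).mulVec (fun k => (v k) ^ 2) := by
  have hm₂ : 0 < m₂ := lt_of_lt_of_le hm₁ hm
  obtain ⟨h1, h2⟩ := pow_entry_le N (Amat N lam η m₂) (Amat N lam η m₁)
    (fun i j => Amat_nonneg N lam hlam η m₂ hm₂ i j)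
    (fun i j => Amat_mono N lam hlam η m₁ m₂ hm₁ hm i j) t
  simp only [dotProduct, Matrix.mulVec, dotProduct]
  refine Finset.sum_le_sum fun i _ => ?_
  refine mul_le_mul_of_nonneg_left ?_ (hlam i)
  refine Finset.sum_le_sum fun j _ => ?_
  exact mul_le_mul_of_nonneg_right (h2 i j) (sq_nonneg _)
end

section
/- Let s > 0 and C > 0 be real numbers. Then the function m ↦ (s/(s + m))^{C/m} is strictly increasing on (0, ∞); equivalently, for 0 < m₁ < m₂, (s/(s + m₁))^{C/m₁} < (s/(s + m₂))^{C/m₂}. -/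
/-- Key inequality: for `0 < a < b` and `s > 0`, `a * log(1 + b/s) < b * log(1 + a/s)`. -/
lemma aux_log_ineq (s a b : ℝ) (hs : 0 < s) (ha : 0 < a) (hab : a < b) :
    a * Real.log (1 + b / s) < b * Real.log (1 + a / s) := by
  have hx : (0:ℝ) < a / s := div_pos ha hs
  have hp : 1 < b / a := (one_lt_div ha).mpr hab
  have hbern := one_add_mul_self_lt_rpow_one_add (by linarith : (-1:ℝ) ≤ a / s)
    (ne_of_gt hx) hp
  have hrw : 1 + (b / a) * (a / s) = 1 + b / s := by
    field_simp
  rw [hrw] at hbern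
  have hb : 0 < b := ha.trans hab
  have h1 : (0:ℝ) < 1 + b / s := by positivity
  have h2 : (0:ℝ) < 1 + a / s := by positivity
  have hl := Real.log_lt_log h1 hbern
  rw [Real.log_rpow h2] at hl
  have h3 := mul_lt_mul_of_pos_left hl ha
  rw [show a * (b / a * Real.log (1 + a / s)) = b * Real.log (1 + a / s) from by
    field_simp] at h3
  exact h3

lemma aux_main (s C : ℝ) (hs : 0 < s) (hC : 0 < C) :
    ∀ m₁ m₂ : ℝ, 0 < m₁ → m₁ < m₂ →
        (s / (s + m₁)) ^ (C / m₁) < (s / (s + m₂)) ^ (C / m₂) := by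
  intro a b ha hab
  have hb : 0 < b := ha.trans hab
  have hsa : (0:ℝ) < s + a := by linarith
  have hsb : (0:ℝ) < s + b := by linarith
  have hba1 : (0:ℝ) < s / (s + a) := div_pos hs hsa
  have hba2 : (0:ℝ) < s / (s + b) := div_pos hs hsb
  rw [Real.rpow_def_of_pos hba1, Real.rpow_def_of_pos hba2, Real.exp_lt_exp]
  have hlog1 : Real.log (s / (s + a)) = -Real.log (1 + a / s) := by
    rw [Real.log_div (ne_of_gt hs) (ne_of_gt hsa)]
    have : 1 + a / s = (s + a) / s := by field_simp
    rw [this, Real.log_div (ne_of_gt hsa) (ne_of_gt hs)]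
    ring
  have hlog2 : Real.log (s / (s + b)) = -Real.log (1 + b / s) := by
    rw [Real.log_div (ne_of_gt hs) (ne_of_gt hsb)]
    have : 1 + b / s = (s + b) / s := by field_simp
    rw [this, Real.log_div (ne_of_gt hsb) (ne_of_gt hs)]
    ring
  rw [hlog1, hlog2]
  have key := aux_log_ineq s a b hs ha hab
  rw [neg_mul, neg_mul, neg_lt_neg_iff, mul_div_assoc', mul_div_assoc',
    div_lt_div_iff₀ hb ha]
  nlinarith [mul_lt_mul_of_pos_left key hC]

/-- For real `s > 0` and compute budget `C > 0`, the function
`m ↦ (s/(s+m))^(C/m)` is strictly increasing on `(0, ∞)`; equivalently, for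
`0 < m₁ < m₂`, `(s/(s+m₁))^(C/m₁) < (s/(s+m₂))^(C/m₂)` (real powers). -/
theorem fixed_compute_prefers_small_batch (s C : ℝ) (hs : 0 < s) (hC : 0 < C) :
    StrictMonoOn (fun m : ℝ => (s / (s + m)) ^ (C / m)) (Set.Ioi (0 : ℝ))
    ∧ ∀ m₁ m₂ : ℝ, 0 < m₁ → m₁ < m₂ →
        (s / (s + m₁)) ^ (C / m₁) < (s / (s + m₂)) ^ (C / m₂) := by
  refine ⟨fun a ha b _ hab => aux_main s C hs hC a b ha hab,
    fun a b ha hab => aux_main s C hs hC a b ha hab⟩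
end

section
/- Let N ≥ 1, let μ be a probability distribution of a random vector ψ on ℝ^N with finite fourth moments (E|ψ_i ψ_j ψ_k ψ_l| < ∞ for all indices), and let Σ = E[ψψᵀ]. Let ψ₁,…,ψ_m be i.i.d. with distribution μ, let η > 0, let Δ ∈ ℝ^N be fixed with C = ΔΔᵀ, and define Δ' = Δ − (η/m) Σ_{i=1}^m ψᵢ (ψᵢᵀ Δ). Then E[Δ' Δ'ᵀ] = C − η Σ C − η C Σ + η² ((m−1)/m) Σ C Σ + (η²/m) E[ψψᵀ C ψψᵀ]. -/
open MeasureTheory Matrix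


-- helper: single coordinate
lemma sgd_aux_single {α : Type*} [MeasurableSpace α] {m : ℕ} {μ : Measure α}
    [IsProbabilityMeasure μ] (a : Fin m) {g : α → ℝ} (hg : Integrable g μ) :
    Integrable (fun X : Fin m → α => g (X a)) (Measure.pi fun _ => μ) ∧
    ∫ X : Fin m → α, g (X a) ∂(Measure.pi fun _ => μ) = ∫ x, g x ∂μ := by
  letI : MeasureSpace α := ⟨μ⟩
  haveI : IsProbabilityMeasure (volume : Measure α) := ‹IsProbabilityMeasure μ›
  have hvol : (Measure.pi fun _ : Fin m => μ) = (volume : Measure (Fin m → α)) :=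
    (volume_pi).symm
  set F : Fin m → α → ℝ := fun c x => if c = a then g x else 1 with hF
  have hFi : ∀ c, Integrable (F c) (volume : Measure α) := by
    intro c
    by_cases h : c = a
    · simp only [hF, if_pos h]; exact hg
    · simp [hF, h]
  have heq : (fun X : Fin m → α => g (X a)) = fun X => ∏ c, F c (X c) := by
    funext X
    simp only [hF]
    rw [Fintype.prod_ite_eq' a (fun c => g (X c))]
  constructor
  · rw [hvol, heq]; exact Integrable.fintype_prod hFi
  · rw [hvol, heq, volume_pi, integral_fintype_prod_eq_prod]
    have : ∀ c, (∫ x, F c x) = if c = a then ∫ x, g x ∂μ else 1 := by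
      intro c
      by_cases h : c = a
      · simp only [hF, if_pos h]; rfl
      · simp [hF, h]
    simp_rw [this]
    rw [Fintype.prod_ite_eq' a (fun _ => ∫ x, g x ∂μ)]

lemma sgd_aux_prod_pair {β : Type*} [CommMonoid β] {m : ℕ} {a b : Fin m} (hab : a ≠ b)
    (A B : Fin m → β) :
    (∏ c, (if c = a then A c else if c = b then B c else 1)) = A a * B b := by
  rw [← Finset.mul_prod_erase Finset.univ _ (Finset.mem_univ a)]
  rw [← Finset.mul_prod_erase (Finset.univ.erase a) _
      (Finset.mem_erase.mpr ⟨hab.symm, Finset.mem_univ b⟩)]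
  rw [if_pos rfl, if_neg hab.symm, if_pos rfl]
  rw [Finset.prod_eq_one, mul_one]
  intro c hc
  simp only [Finset.mem_erase] at hc
  rw [if_neg hc.2.1, if_neg hc.1]

lemma sgd_aux_pair {α : Type*} [MeasurableSpace α] {m : ℕ} {μ : Measure α}
    [IsProbabilityMeasure μ] {a b : Fin m} (hab : a ≠ b) {g h : α → ℝ}
    (hg : Integrable g μ) (hh : Integrable h μ) :
    Integrable (fun X : Fin m → α => g (X a) * h (X b)) (Measure.pi fun _ => μ) ∧
    ∫ X : Fin m → α, g (X a) * h (X b) ∂(Measure.pi fun _ => μ)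
      = (∫ x, g x ∂μ) * ∫ x, h x ∂μ := by
  letI : MeasureSpace α := ⟨μ⟩
  haveI : IsProbabilityMeasure (volume : Measure α) := ‹IsProbabilityMeasure μ›
  have hvol : (Measure.pi fun _ : Fin m => μ) = (volume : Measure (Fin m → α)) :=
    (volume_pi).symm
  set F : Fin m → α → ℝ := fun c x => if c = a then g x else if c = b then h x else 1 with hF
  have hFi : ∀ c, Integrable (F c) (volume : Measure α) := by
    intro c
    by_cases h1 : c = a
    · simp only [hF, if_pos h1]; exact hg
    by_cases h2 : c = b
    · simp only [hF, if_neg h1, if_pos h2]; exact hh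
    · simp [hF, h1, h2]
  have heq : (fun X : Fin m → α => g (X a) * h (X b)) = fun X => ∏ c, F c (X c) := by
    funext X
    simp only [hF]
    rw [sgd_aux_prod_pair hab (fun c => g (X c)) (fun c => h (X c))]
  constructor
  · rw [hvol, heq]; exact Integrable.fintype_prod hFi
  · rw [hvol, heq, volume_pi, integral_fintype_prod_eq_prod]
    have : ∀ c, (∫ x, F c x) =
        if c = a then ∫ x, g x ∂μ else if c = b then ∫ x, h x ∂μ else 1 := by
      intro c
      by_cases h1 : c = a
      · simp only [hF, if_pos h1]; rfl
      by_cases h2 : c = b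
      · simp only [hF, if_neg h1, if_pos h2]; rfl
      · simp [hF, h1, h2]
    simp_rw [this]
    rw [sgd_aux_prod_pair hab (fun _ => ∫ x, g x ∂μ) (fun _ => ∫ x, h x ∂μ)]

/-- Let `μ` be a probability distribution on `ℝ^N` with finite fourth
moments and second-moment matrix `S`.  Let `ψ₁,…,ψ_m` be i.i.d. with distribution `μ`,
`η > 0`, `Δ` fixed with `C = Δ Δᵀ`, and `Δ' = Δ − (η/m) ∑ᵢ ψᵢ (ψᵢᵀ Δ)`.  Then (entrywise)
`E[Δ' Δ'ᵀ] = C − η S C − η C S + η²((m−1)/m) S C S + (η²/m) E[ψψᵀ C ψψᵀ]`. -/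
theorem sgd_one_step_error_matrix_general
    (N : ℕ) (hN : 1 ≤ N) (μ : Measure (Fin N → ℝ)) [IsProbabilityMeasure μ]
    (h4 : ∀ i j k l : Fin N, Integrable (fun ψ => ψ i * ψ j * ψ k * ψ l) μ)
    (S : Matrix (Fin N) (Fin N) ℝ) (hS : ∀ i j, S i j = ∫ ψ, ψ i * ψ j ∂μ)
    (m : ℕ) (hm : 1 ≤ m) (η : ℝ) (hη : 0 < η)
    (Δ : Fin N → ℝ) (C : Matrix (Fin N) (Fin N) ℝ) (hC : C = vecMulVec Δ Δ) :
    ∀ i j : Fin N,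
      (∫ X : Fin m → (Fin N → ℝ),
          (Δ i - (η / m) * ∑ a, X a i * (X a ⬝ᵥ Δ)) *
          (Δ j - (η / m) * ∑ a, X a j * (X a ⬝ᵥ Δ))
        ∂(Measure.pi fun _ : Fin m => μ))
      = (C - η • (S * C) - η • (C * S) + (η ^ 2 * ((m : ℝ) - 1) / m) • (S * C * S)
          + (η ^ 2 / m) • Matrix.of (fun i j => ∫ ψ, ψ i * (ψ ⬝ᵥ C.mulVec ψ) * ψ j ∂μ)) i j := by
  have hm' : (m : ℝ) ≠ 0 := Nat.cast_ne_zero.mpr (Nat.one_le_iff_ne_zero.mp hm)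
  -- second moments integrable
  have h2 : ∀ i k : Fin N, Integrable (fun ψ => ψ i * ψ k) μ := by
    intro i k
    have hb : Integrable (fun ψ => (1 + ψ i * ψ k * (ψ i * ψ k)) / 2) μ := by
      have : Integrable (fun ψ => ψ i * ψ k * (ψ i * ψ k)) μ := by
        have := h4 i k i k
        simpa [mul_assoc, mul_comm, mul_left_comm] using this
      exact ((integrable_const (1:ℝ)).add this).div_const 2
    refine hb.mono' ?_ ?_
    · exact ((measurable_pi_apply i).mul (measurable_pi_apply k)).aestronglyMeasurable
    · filter_upwards with ψ
      rw [Real.norm_eq_abs]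
      nlinarith [sq_nonneg (|ψ i * ψ k| - 1), sq_abs (ψ i * ψ k), abs_nonneg (ψ i * ψ k)]
  set g : Fin N → (Fin N → ℝ) → ℝ := fun i ψ => ψ i * (ψ ⬝ᵥ Δ) with hgdef
  have hgi : ∀ i, Integrable (g i) μ := by
    intro i
    have : g i = fun ψ => ∑ k, Δ k * (ψ i * ψ k) := by
      funext ψ
      simp only [hgdef, dotProduct, Finset.mul_sum]
      exact Finset.sum_congr rfl fun k _ => by ring
    rw [this]
    exact integrable_finset_sum _ fun k _ => (h2 i k).const_mul (Δ k)
  have hggi : ∀ i j, Integrable (fun ψ => g i ψ * g j ψ) μ := by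
    intro i j
    have : (fun ψ => g i ψ * g j ψ)
        = fun ψ => ∑ k, ∑ l, (Δ k * Δ l) * (ψ i * ψ k * ψ j * ψ l) := by
      funext ψ
      simp only [hgdef, dotProduct, Finset.mul_sum, Finset.sum_mul]
      rw [Finset.sum_comm]
      exact Finset.sum_congr rfl fun k _ => Finset.sum_congr rfl fun l _ => by ring
    rw [this]
    exact integrable_finset_sum _ fun k _ => integrable_finset_sum _ fun l _ =>
      (h4 i k j l).const_mul _
  have hG : ∀ i, (∫ ψ, g i ψ ∂μ) = ∑ k, S i k * Δ k := by
    intro i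
    have : g i = fun ψ => ∑ k, Δ k * (ψ i * ψ k) := by
      funext ψ
      simp only [hgdef, dotProduct, Finset.mul_sum]
      exact Finset.sum_congr rfl fun k _ => by ring
    rw [this, integral_finset_sum _ fun k _ => (h2 i k).const_mul (Δ k)]
    refine Finset.sum_congr rfl fun k _ => ?_
    rw [integral_const_mul, hS i k]
    ring
  have hquad : ∀ i j, (fun ψ : Fin N → ℝ => ψ i * (ψ ⬝ᵥ C.mulVec ψ) * ψ j)
      = fun ψ => g i ψ * g j ψ := by
    intro i j
    funext ψ
    have : ψ ⬝ᵥ C.mulVec ψ = (ψ ⬝ᵥ Δ) * (ψ ⬝ᵥ Δ) := by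
      subst hC
      simp only [dotProduct, mulVec, vecMulVec_apply, Finset.mul_sum, Finset.sum_mul]
      exact Finset.sum_congr rfl fun k _ => Finset.sum_congr rfl fun l _ => by ring
    rw [this]
    simp only [hgdef]
    ring
  have hSsymm : ∀ k l : Fin N, S k l = S l k := by
    intro k l
    have : (fun ψ : Fin N → ℝ => ψ k * ψ l) = fun ψ => ψ l * ψ k := by
      funext ψ; ring
    rw [hS, hS, this]
  intro i j
  set P : Measure (Fin m → Fin N → ℝ) := Measure.pi fun _ : Fin m => μ with hP
  set GG : Fin N → ℝ := fun i => ∑ k, S i k * Δ k with hGG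
  set Q : ℝ := ∫ ψ, g i ψ * g j ψ ∂μ with hQdef
  -- integrability over the product
  have hintg : ∀ (i' : Fin N) (a : Fin m), Integrable (fun X => g i' (X a)) P :=
    fun i' a => (sgd_aux_single a (hgi i')).1
  have hintsum : ∀ i' : Fin N,
      Integrable (fun X : Fin m → Fin N → ℝ => ∑ a, g i' (X a)) P :=
    fun i' => integrable_finset_sum _ fun a _ => hintg i' a
  have hintpair : ∀ a b : Fin m, Integrable (fun X => g i (X a) * g j (X b)) P := by
    intro a b
    by_cases hab : a = b
    · subst hab; exact (sgd_aux_single a (hggi i j)).1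
    · exact (sgd_aux_pair hab (hgi i) (hgi j)).1
  have hintdsum :
      Integrable (fun X : Fin m → Fin N → ℝ => ∑ a, ∑ b, g i (X a) * g j (X b)) P :=
    integrable_finset_sum _ fun a _ => integrable_finset_sum _ fun b _ => hintpair a b
  -- integral values
  have hIsum : ∀ i' : Fin N,
      (∫ X, (∑ a, g i' (X a)) ∂P) = (m : ℝ) * GG i' := by
    intro i'
    rw [integral_finset_sum _ fun a _ => hintg i' a]
    have : ∀ a : Fin m, (∫ X, g i' (X a) ∂P) = GG i' := by
      intro a
      rw [(sgd_aux_single a (hgi i')).2, hG i']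
    simp_rw [this]
    rw [Finset.sum_const, Finset.card_univ, Fintype.card_fin, nsmul_eq_mul]
  have hIpair : ∀ a b : Fin m,
      (∫ X, g i (X a) * g j (X b) ∂P) = if a = b then Q else GG i * GG j := by
    intro a b
    by_cases hab : a = b
    · subst hab
      rw [if_pos rfl, (sgd_aux_single a (hggi i j)).2]
    · rw [if_neg hab, (sgd_aux_pair hab (hgi i) (hgi j)).2, hG i, hG j]
  have hIdsum : (∫ X, (∑ a, ∑ b, g i (X a) * g j (X b)) ∂P)
      = (m : ℝ) * Q + ((m : ℝ) * ((m : ℝ) - 1)) * (GG i * GG j) := by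
    rw [integral_finset_sum _ fun a _ => integrable_finset_sum _ fun b _ => hintpair a b]
    have h1 : ∀ a : Fin m, (∫ X, (∑ b, g i (X a) * g j (X b)) ∂P)
        = Q + ((m : ℝ) - 1) * (GG i * GG j) := by
      intro a
      rw [integral_finset_sum _ fun b _ => hintpair a b]
      simp_rw [hIpair a]
      have : ∀ b : Fin m, (if a = b then Q else GG i * GG j)
          = (if a = b then Q - GG i * GG j else 0) + GG i * GG j := by
        intro b; by_cases hab : a = b <;> simp [hab]
      simp_rw [this]
      rw [Finset.sum_add_distrib, Finset.sum_ite_eq, if_pos (Finset.mem_univ a),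
        Finset.sum_const, Finset.card_univ, Fintype.card_fin, nsmul_eq_mul]
      ring
    simp_rw [h1]
    rw [Finset.sum_const, Finset.card_univ, Fintype.card_fin, nsmul_eq_mul]
    ring
  -- expand the integrand
  have hexp : ∀ X : Fin m → (Fin N → ℝ),
      (Δ i - (η / m) * ∑ a, X a i * (X a ⬝ᵥ Δ)) *
        (Δ j - (η / m) * ∑ a, X a j * (X a ⬝ᵥ Δ))
      = Δ i * Δ j - (η / m * Δ i) * (∑ a, g j (X a))
          - (η / m * Δ j) * (∑ a, g i (X a))
          + (η / m * (η / m)) * (∑ a, ∑ b, g i (X a) * g j (X b)) := by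
    intro X
    simp only [hgdef]
    rw [← Finset.sum_mul_sum]
    ring
  simp only [hexp]
  have hB : Integrable (fun X : Fin m → Fin N → ℝ =>
      η / ↑m * Δ i * ∑ a, g j (X a)) P := (hintsum j).const_mul _
  have hCint : Integrable (fun X : Fin m → Fin N → ℝ =>
      η / ↑m * Δ j * ∑ a, g i (X a)) P := (hintsum i).const_mul _
  have hAB : Integrable (fun X : Fin m → Fin N → ℝ =>
      Δ i * Δ j - η / ↑m * Δ i * ∑ a, g j (X a)) P := (integrable_const _).sub hB
  have hABC : Integrable (fun X : Fin m → Fin N → ℝ =>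
      Δ i * Δ j - η / ↑m * Δ i * ∑ a, g j (X a)
        - η / ↑m * Δ j * ∑ a, g i (X a)) P := hAB.sub hCint
  have hD : Integrable (fun X : Fin m → Fin N → ℝ =>
      η / ↑m * (η / ↑m) * ∑ a, ∑ b, g i (X a) * g j (X b)) P := hintdsum.const_mul _
  rw [integral_add hABC hD, integral_sub hAB hCint,
    integral_sub (integrable_const _) hB,
    integral_const, integral_const_mul, integral_const_mul, integral_const_mul,
    hIsum i, hIsum j, hIdsum]
  -- right-hand side entries
  have hC' : C i j = Δ i * Δ j := by rw [hC, vecMulVec_apply]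
  have hSC : (S * C) i j = GG i * Δ j := by
    rw [Matrix.mul_apply, hGG, Finset.sum_mul]
    exact Finset.sum_congr rfl fun k _ => by rw [hC, vecMulVec_apply]; ring
  have hCS : (C * S) i j = Δ i * GG j := by
    rw [Matrix.mul_apply, hGG, Finset.mul_sum]
    refine Finset.sum_congr rfl fun k _ => ?_
    rw [hC, vecMulVec_apply, hSsymm j k]
    ring
  have hSCS : (S * C * S) i j = GG i * GG j := by
    rw [Matrix.mul_apply, hGG, Finset.mul_sum]
    refine Finset.sum_congr rfl fun k _ => ?_
    have : (S * C) i k = GG i * Δ k := by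
      rw [Matrix.mul_apply, hGG, Finset.sum_mul]
      exact Finset.sum_congr rfl fun l _ => by rw [hC, vecMulVec_apply]; ring
    rw [this, hSsymm j k, hGG]
    ring
  have hQ' : (∫ ψ, ψ i * (ψ ⬝ᵥ C.mulVec ψ) * ψ j ∂μ) = Q := by
    rw [hquad i j, hQdef]
  simp only [Matrix.sub_apply, Matrix.add_apply, Matrix.smul_apply, smul_eq_mul,
    Matrix.of_apply, hC', hSC, hCS, hSCS, hQ']
  have hPuniv : P Set.univ = 1 := measure_univ
  rw [measureReal_def, hPuniv]
  simp only [ENNReal.toReal_one, smul_eq_mul, one_smul]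
  field_simp
  ring
end

section
/- Let N ≥ 1, let μ be a probability distribution of a random vector ψ on ℝ^N with finite fourth moments, and let Σ = E[ψψᵀ] = Σ_k λ_k u_k u_kᵀ with u₁,…,u_N an orthonormal basis. Define φ_k = u_kᵀψ and the fourth-moment tensor κ_{ijkl} = E[φ_i φ_j φ_k φ_l]. Let η > 0, m ≥ 1, and suppose the matrix sequence (C_t)_{t∈ℕ} satisfies C_{t+1} = C_t − η Σ C_t − η C_t Σ + η²((m−1)/m) Σ C_t Σ + (η²/m) E[ψψᵀ C_t ψψᵀ], with C₀ = ΔΔᵀ for some Δ ∈ ℝ^N, and set v_k = u_kᵀΔ. Writing d_{t,ij} = u_iᵀ C_t u_j, the N²-dimensional vector (d_{t,ij})_{ij} equals (G + (η²/m) K)^t applied to the vector (v_i v_j)_{ij}, where G is the diagonal N²×N² matrix with G_{(ij),(ij)} = 1 − η(λ_i + λ_j) + η²((m−1)/m) λ_i λ_j and K is the N²×N² matrix with K_{(ij),(kl)} = κ_{ijkl}; consequently Tr(Σ C_t) = Σ_k λ_k d_{t,kk}. -/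
open MeasureTheory Matrix

lemma aux_int4 {N : ℕ} {μ : Measure (Fin N → ℝ)}
    (h4 : ∀ i j k l : Fin N, Integrable (fun ψ => ψ i * ψ j * ψ k * ψ l) μ)
    (a b c d : Fin N → ℝ) :
    Integrable (fun ψ => (a ⬝ᵥ ψ) * (b ⬝ᵥ ψ) * (c ⬝ᵥ ψ) * (d ⬝ᵥ ψ)) μ := by
  have h : (fun ψ : Fin N → ℝ => (a ⬝ᵥ ψ) * (b ⬝ᵥ ψ) * (c ⬝ᵥ ψ) * (d ⬝ᵥ ψ))
      = fun ψ => ∑ i, ∑ j, ∑ k, ∑ l, (d i * c j * b k * a l) * (ψ i * ψ j * ψ k * ψ l) := by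
    funext ψ
    simp only [dotProduct, Finset.sum_mul, Finset.mul_sum]
    refine Finset.sum_congr rfl fun i _ => Finset.sum_congr rfl fun j _ =>
      Finset.sum_congr rfl fun k _ => Finset.sum_congr rfl fun l _ => by ring
  rw [h]
  refine integrable_finset_sum _ fun i _ => integrable_finset_sum _ fun j _ =>
    integrable_finset_sum _ fun k _ => integrable_finset_sum _ fun l _ =>
      ((h4 i j k l).const_mul _)

lemma aux_int2 {N : ℕ} {μ : Measure (Fin N → ℝ)}
    (h4 : ∀ i j k l : Fin N, Integrable (fun ψ => ψ i * ψ j * ψ k * ψ l) μ)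
    (M : Matrix (Fin N) (Fin N) ℝ) (a b : Fin N) :
    Integrable (fun ψ => ψ a * (ψ ⬝ᵥ M.mulVec ψ) * ψ b) μ := by
  have h : (fun ψ : Fin N → ℝ => ψ a * (ψ ⬝ᵥ M.mulVec ψ) * ψ b)
      = fun ψ => ∑ c, ∑ d, M c d * (ψ a * ψ c * ψ d * ψ b) := by
    funext ψ
    simp only [dotProduct, mulVec, Finset.sum_mul, Finset.mul_sum]
    refine Finset.sum_congr rfl fun c _ => Finset.sum_congr rfl fun d _ => by ring
  rw [h]
  exact integrable_finset_sum _ fun c _ => integrable_finset_sum _ fun d _ =>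
    ((h4 a c d b).const_mul _)

lemma conj_apply {N : ℕ} (u : Fin N → Fin N → ℝ) (M : Matrix (Fin N) (Fin N) ℝ) (i j : Fin N) :
    (Matrix.of u * M * (Matrix.of u)ᵀ) i j = u i ⬝ᵥ M.mulVec (u j) := by
  simp only [Matrix.mul_apply, Matrix.transpose_apply, Matrix.of_apply, dotProduct, mulVec,
    Finset.sum_mul, Finset.mul_sum]
  rw [Finset.sum_comm]
  refine Finset.sum_congr rfl fun c _ => Finset.sum_congr rfl fun d _ => by ring

lemma dq_expand {N : ℕ} (φ : Fin N → ℝ) (A : Matrix (Fin N) (Fin N) ℝ) :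
    φ ⬝ᵥ A.mulVec φ = ∑ k, ∑ l, φ k * φ l * A k l := by
  simp only [dotProduct, mulVec, Finset.mul_sum]
  refine Finset.sum_congr rfl fun k _ => Finset.sum_congr rfl fun l _ => by ring

lemma quadform {N : ℕ} (u : Fin N → Fin N → ℝ)
    (hUtU : (Matrix.of u)ᵀ * Matrix.of u = 1)
    (M : Matrix (Fin N) (Fin N) ℝ) (ψ : Fin N → ℝ) :
    ψ ⬝ᵥ M.mulVec ψ = ∑ k, ∑ l, (u k ⬝ᵥ ψ) * (u l ⬝ᵥ ψ) * (u k ⬝ᵥ M.mulVec (u l)) := by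
  have h1 : (Matrix.of u * M * (Matrix.of u)ᵀ).mulVec ((Matrix.of u).mulVec ψ)
      = (Matrix.of u).mulVec (M.mulVec ψ) := by
    rw [Matrix.mulVec_mulVec, Matrix.mul_assoc (Matrix.of u * M), hUtU, Matrix.mul_one,
      ← Matrix.mulVec_mulVec]
  have h2 : ((Matrix.of u).mulVec ψ) ⬝ᵥ (Matrix.of u * M * (Matrix.of u)ᵀ).mulVec
      ((Matrix.of u).mulVec ψ) = ψ ⬝ᵥ M.mulVec ψ := by
    rw [h1, Matrix.dotProduct_mulVec]
    congr 1
    show ((Matrix.of u).mulVec ψ) ᵥ* (Matrix.of u) = ψ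
    rw [← Matrix.transpose_transpose (Matrix.of u), Matrix.vecMul_transpose,
      Matrix.transpose_transpose, Matrix.mulVec_mulVec, hUtU, Matrix.one_mulVec]
  rw [← h2, dq_expand]
  exact Finset.sum_congr rfl fun k _ => Finset.sum_congr rfl fun l _ => by
    rw [conj_apply]; rfl

lemma Eterm {N : ℕ} {μ : Measure (Fin N → ℝ)}
    (h4 : ∀ i j k l : Fin N, Integrable (fun ψ => ψ i * ψ j * ψ k * ψ l) μ)
    (u : Fin N → Fin N → ℝ)
    (hUtU : (Matrix.of u)ᵀ * Matrix.of u = 1)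
    (κ : Fin N → Fin N → Fin N → Fin N → ℝ)
    (hκ : ∀ i j k l, κ i j k l = ∫ ψ, (u i ⬝ᵥ ψ) * (u j ⬝ᵥ ψ) * (u k ⬝ᵥ ψ) * (u l ⬝ᵥ ψ) ∂μ)
    (M : Matrix (Fin N) (Fin N) ℝ) (i j : Fin N) :
    u i ⬝ᵥ (Matrix.of fun a b => ∫ ψ, ψ a * (ψ ⬝ᵥ M.mulVec ψ) * ψ b ∂μ).mulVec (u j)
      = ∑ k, ∑ l, κ i j k l * (u k ⬝ᵥ M.mulVec (u l)) := by
  have e0 : ∀ E : Matrix (Fin N) (Fin N) ℝ,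
      u i ⬝ᵥ E.mulVec (u j) = ∑ a, ∑ b, (u i a * u j b) * E a b := by
    intro E
    simp only [dotProduct, mulVec, Finset.mul_sum]
    refine Finset.sum_congr rfl fun a _ => Finset.sum_congr rfl fun b _ => by ring
  have e1 : ∀ (Q : ℝ) (ψ : Fin N → ℝ), (u i ⬝ᵥ ψ) * Q * (u j ⬝ᵥ ψ)
      = ∑ a, ∑ b, (u i a * u j b) * (ψ a * Q * ψ b) := by
    intro Q ψ
    simp only [dotProduct, Finset.sum_mul, Finset.mul_sum]
    rw [Finset.sum_comm]
    refine Finset.sum_congr rfl fun a _ => Finset.sum_congr rfl fun b _ => by ring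
  have stepA : u i ⬝ᵥ (Matrix.of fun a b => ∫ ψ, ψ a * (ψ ⬝ᵥ M.mulVec ψ) * ψ b ∂μ).mulVec (u j)
      = ∫ ψ, (u i ⬝ᵥ ψ) * (ψ ⬝ᵥ M.mulVec ψ) * (u j ⬝ᵥ ψ) ∂μ := by
    rw [e0]
    have : (fun ψ : Fin N → ℝ => (u i ⬝ᵥ ψ) * (ψ ⬝ᵥ M.mulVec ψ) * (u j ⬝ᵥ ψ))
        = fun ψ => ∑ a, ∑ b, (u i a * u j b) * (ψ a * (ψ ⬝ᵥ M.mulVec ψ) * ψ b) := by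
      funext ψ; exact e1 _ ψ
    rw [this, integral_finset_sum _ (fun a _ => integrable_finset_sum _ (fun b _ =>
      ((aux_int2 h4 M a b).const_mul _)))]
    refine Finset.sum_congr rfl fun a _ => ?_
    rw [integral_finset_sum _ (fun b _ => ((aux_int2 h4 M a b).const_mul _))]
    refine Finset.sum_congr rfl fun b _ => ?_
    simp only [Matrix.of_apply]
    exact (integral_const_mul _ _).symm
  rw [stepA]
  have e3 : (fun ψ : Fin N → ℝ => (u i ⬝ᵥ ψ) * (ψ ⬝ᵥ M.mulVec ψ) * (u j ⬝ᵥ ψ))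
      = fun ψ => ∑ k, ∑ l, (u k ⬝ᵥ M.mulVec (u l)) *
          ((u i ⬝ᵥ ψ) * (u j ⬝ᵥ ψ) * (u k ⬝ᵥ ψ) * (u l ⬝ᵥ ψ)) := by
    funext ψ
    rw [quadform u hUtU M ψ]
    simp only [Finset.sum_mul, Finset.mul_sum]
    refine Finset.sum_congr rfl fun k _ => Finset.sum_congr rfl fun l _ => by ring
  rw [e3, integral_finset_sum _ (fun k _ => integrable_finset_sum _ (fun l _ =>
    ((aux_int4 h4 (u i) (u j) (u k) (u l)).const_mul _)))]
  refine Finset.sum_congr rfl fun k _ => ?_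
  rw [integral_finset_sum _ (fun l _ => ((aux_int4 h4 (u i) (u j) (u k) (u l)).const_mul _))]
  refine Finset.sum_congr rfl fun l _ => ?_
  rw [integral_const_mul, hκ]
  ring

/-- Let `μ` be a probability distribution on `ℝ^N` with finite fourth
moments and second-moment matrix `S = ∑ₖ λₖ uₖ uₖᵀ` (`u₁,…,u_N` orthonormal).  With
diagonalized features `φₖ = uₖᵀ ψ` and fourth-moment tensor `κᵢⱼₖₗ = E[φᵢ φⱼ φₖ φₗ]`,
suppose `C_{t+1} = C_t − η S C_t − η C_t S + η²((m−1)/m) S C_t S + (η²/m) E[ψψᵀ C_t ψψᵀ]`,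
`C₀ = Δ Δᵀ`, `vₖ = uₖᵀ Δ`.  Writing `d_{t,ij} = uᵢᵀ C_t uⱼ`, the `N²`-vector `(d_{t,ij})`
equals `(G + (η²/m) K)^t` applied to `(vᵢ vⱼ)`, with `G` diagonal with entries
`1 − η(λᵢ + λⱼ) + η²((m−1)/m) λᵢ λⱼ` and `K_{(ij),(kl)} = κᵢⱼₖₗ`; consequently
`Tr(S C_t) = ∑ₖ λₖ d_{t,kk}`. -/
theorem sgd_loss_arbitrary_features
    (N : ℕ) (hN : 1 ≤ N) (μ : Measure (Fin N → ℝ)) [IsProbabilityMeasure μ]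
    (h4 : ∀ i j k l : Fin N, Integrable (fun ψ => ψ i * ψ j * ψ k * ψ l) μ)
    (u : Fin N → (Fin N → ℝ))
    (hu : ∀ k l, u k ⬝ᵥ u l = if k = l then (1 : ℝ) else 0)
    (lam : Fin N → ℝ) (hlam : ∀ k, 0 ≤ lam k)
    (S : Matrix (Fin N) (Fin N) ℝ)
    (hS : ∀ i j, S i j = ∫ ψ, ψ i * ψ j ∂μ)
    (hSdiag : S = ∑ k, lam k • vecMulVec (u k) (u k))
    (κ : Fin N → Fin N → Fin N → Fin N → ℝ)
    (hκ : ∀ i j k l, κ i j k l = ∫ ψ, (u i ⬝ᵥ ψ) * (u j ⬝ᵥ ψ) * (u k ⬝ᵥ ψ) * (u l ⬝ᵥ ψ) ∂μ)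
    (η : ℝ) (hη : 0 < η) (m : ℕ) (hm : 1 ≤ m)
    (Δ : Fin N → ℝ) (C : ℕ → Matrix (Fin N) (Fin N) ℝ)
    (hC0 : C 0 = vecMulVec Δ Δ)
    (hrec : ∀ t, C (t + 1) = C t - η • (S * C t) - η • (C t * S)
        + (η ^ 2 * ((m : ℝ) - 1) / m) • (S * C t * S)
        + (η ^ 2 / m) • Matrix.of (fun i j => ∫ ψ, ψ i * (ψ ⬝ᵥ (C t).mulVec ψ) * ψ j ∂μ))
    (G K : Matrix (Fin N × Fin N) (Fin N × Fin N) ℝ)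
    (hG : G = Matrix.diagonal (fun p : Fin N × Fin N =>
        1 - η * (lam p.1 + lam p.2) + η ^ 2 * ((m : ℝ) - 1) / m * (lam p.1 * lam p.2)))
    (hK : ∀ p q : Fin N × Fin N, K p q = κ p.1 p.2 q.1 q.2) :
    ∀ t : ℕ,
      ((fun p : Fin N × Fin N => u p.1 ⬝ᵥ (C t).mulVec (u p.2))
          = ((G + (η ^ 2 / m) • K) ^ t).mulVec
              (fun q : Fin N × Fin N => (u q.1 ⬝ᵥ Δ) * (u q.2 ⬝ᵥ Δ)))
      ∧ (S * C t).trace = ∑ k, lam k * (u k ⬝ᵥ (C t).mulVec (u k)) := by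
    -- orthogonality facts
  have hUUt : Matrix.of u * (Matrix.of u)ᵀ = 1 := by
    ext k l
    simpa [Matrix.mul_apply, dotProduct, Matrix.one_apply] using hu k l
  have hUtU : (Matrix.of u)ᵀ * Matrix.of u = 1 := mul_eq_one_comm.mp hUUt
  have hSapp : ∀ b a, S b a = ∑ k, lam k * (u k b * u k a) := by
    intro b a
    rw [hSdiag]
    simp [Matrix.sum_apply, Matrix.smul_apply, vecMulVec_apply, smul_eq_mul, mul_assoc]
  have huS : ∀ i, (u i) ᵥ* S = lam i • u i := by
    intro i; funext a
    have : ∑ b, u i b * S b a = ∑ k, (u i ⬝ᵥ u k) * (lam k * u k a) := by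
      simp only [hSapp, Finset.mul_sum, dotProduct, Finset.sum_mul]
      rw [Finset.sum_comm]
      refine Finset.sum_congr rfl fun k _ => Finset.sum_congr rfl fun b _ => by ring
    have h2 : ∑ k, (u i ⬝ᵥ u k) * (lam k * u k a) = lam i * u i a := by
      simp only [hu]
      rw [Finset.sum_eq_single i]
      · simp
      · intro k _ hk; simp [Ne.symm hk]
      · simp
    show ∑ b, u i b * S b a = lam i * u i a
    rw [this, h2]
  have hSu : ∀ j, S *ᵥ (u j) = lam j • u j := by
    intro j; funext a
    have : ∑ b, S a b * u j b = ∑ k, (u k ⬝ᵥ u j) * (lam k * u k a) := by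
      simp only [hSapp, Finset.mul_sum, dotProduct, Finset.sum_mul]
      rw [Finset.sum_comm]
      refine Finset.sum_congr rfl fun k _ => Finset.sum_congr rfl fun b _ => by ring
    have h2 : ∑ k, (u k ⬝ᵥ u j) * (lam k * u k a) = lam j * u j a := by
      simp only [hu]
      rw [Finset.sum_eq_single j]
      · simp
      · intro k _ hk; simp [hk]
      · simp
    show ∑ b, S a b * u j b = lam j * u j a
    rw [this, h2]
  -- the one-step recursion in the diagonal basis
  have hstep : ∀ t, (fun p : Fin N × Fin N => u p.1 ⬝ᵥ (C (t + 1)).mulVec (u p.2))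
      = (G + (η ^ 2 / m) • K).mulVec
          (fun p : Fin N × Fin N => u p.1 ⬝ᵥ (C t).mulVec (u p.2)) := by
    intro t
    funext p
    obtain ⟨i, j⟩ := p
    dsimp only
    have h1 : u i ⬝ᵥ (S * C t) *ᵥ u j = lam i * (u i ⬝ᵥ (C t) *ᵥ u j) := by
      rw [← Matrix.mulVec_mulVec, Matrix.dotProduct_mulVec, huS, smul_dotProduct, smul_eq_mul]
    have h2 : u i ⬝ᵥ (C t * S) *ᵥ u j = lam j * (u i ⬝ᵥ (C t) *ᵥ u j) := by
      rw [← Matrix.mulVec_mulVec, hSu, Matrix.mulVec_smul, dotProduct_smul, smul_eq_mul]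
    have h3 : u i ⬝ᵥ (S * C t * S) *ᵥ u j = lam i * (lam j * (u i ⬝ᵥ (C t) *ᵥ u j)) := by
      rw [← Matrix.mulVec_mulVec, hSu, Matrix.mulVec_smul, dotProduct_smul, smul_eq_mul, h1]
      ring
    have h5 := Eterm h4 u hUtU κ hκ (C t) i j
    have hRHS : ((G + (η ^ 2 / m) • K).mulVec
          (fun p : Fin N × Fin N => u p.1 ⬝ᵥ (C t).mulVec (u p.2))) (i, j)
        = (1 - η * (lam i + lam j) + η ^ 2 * ((m : ℝ) - 1) / m * (lam i * lam j))
            * (u i ⬝ᵥ (C t) *ᵥ u j)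
          + (η ^ 2 / m) * ∑ k, ∑ l, κ i j k l * (u k ⬝ᵥ (C t) *ᵥ u l) := by
      rw [Matrix.add_mulVec, Matrix.smul_mulVec]
      simp only [Pi.add_apply, Pi.smul_apply, smul_eq_mul]
      congr 1
      · rw [hG]
        simp [Matrix.mulVec_diagonal]
      · congr 1
        simp only [Matrix.mulVec, dotProduct, hK]
        rw [Fintype.sum_prod_type]
    rw [hrec t, hRHS]
    rw [Matrix.add_mulVec, Matrix.add_mulVec, Matrix.sub_mulVec, Matrix.sub_mulVec,
      Matrix.smul_mulVec, Matrix.smul_mulVec, Matrix.smul_mulVec,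
      Matrix.smul_mulVec]
    simp only [dotProduct_sub, dotProduct_add, dotProduct_smul, smul_eq_mul]
    rw [h1, h2, h3, h5]
    ring
  -- trace identity (valid for any matrix)
  have htrace : ∀ B : Matrix (Fin N) (Fin N) ℝ,
      (S * B).trace = ∑ k, lam k * (u k ⬝ᵥ B.mulVec (u k)) := by
    intro B
    rw [hSdiag, Finset.sum_mul, Matrix.trace_sum]
    refine Finset.sum_congr rfl fun k _ => ?_
    rw [Matrix.smul_mul, Matrix.trace_smul, smul_eq_mul]
    congr 1
    rw [Matrix.trace_mul_comm]
    simp only [Matrix.trace, Matrix.diag, Matrix.mul_apply, vecMulVec_apply, dotProduct,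
      Matrix.mulVec, Finset.mul_sum]
    refine Finset.sum_congr rfl fun a _ => Finset.sum_congr rfl fun b _ => by ring
  intro t
  refine ⟨?_, htrace (C t)⟩
  induction t with
  | zero =>
    funext p
    rw [pow_zero, Matrix.one_mulVec, hC0]
    simp only [Matrix.mulVec, dotProduct, vecMulVec_apply, Finset.mul_sum, Finset.sum_mul]
    rw [Finset.sum_comm]
    refine Finset.sum_congr rfl fun a _ => Finset.sum_congr rfl fun b _ => by ring
  | succ t ih =>
    rw [hstep t, ih, Matrix.mulVec_mulVec, ← pow_succ']
end

section
/- Let N ≥ 1, let μ be a probability distribution of a random vector ψ on ℝ^N with finite fourth moments, and let Σ = E[ψψᵀ] = Σ_k λ_k u_k u_kᵀ with u₁,…,u_N orthonormal and λ_k ≥ 0. Suppose there is α ≥ 1 such that for every positive-semidefinite symmetric G ∈ ℝ^{N×N}, E[ψψᵀ G ψψᵀ] ⪯ (α+1) Σ G Σ + α Σ · Tr(Σ G) in the Loewner order. Let η > 0, m ≥ 1, and suppose (C_t)_{t∈ℕ} satisfies C_{t+1} = C_t − η Σ C_t − η C_t Σ + η²((m−1)/m) Σ C_t Σ + (η²/m)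 E[ψψᵀ C_t ψψᵀ], with C₀ = ΔΔᵀ for some Δ ∈ ℝ^N, and set v_k = u_kᵀΔ. Then for all t ∈ ℕ, Tr(Σ C_t) ≤ λᵀ A_α^t v², where A_α = (I − η·diag(λ))² + (α η²/m) [ diag(λ²) + λλᵀ ] and v² is the entrywise square of v. -/
open MeasureTheory Matrix

set_option linter.unusedSectionVars false
namespace SGDAux

variable {N : ℕ} {μ : Measure (Fin N → ℝ)} [IsProbabilityMeasure μ]

lemma meas_dot (a : Fin N → ℝ) : Measurable (fun ψ : Fin N → ℝ => a ⬝ᵥ ψ) := by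
  simp only [dotProduct]
  exact Finset.measurable_sum _ fun i _ => measurable_const.mul (measurable_pi_apply i)

lemma int4 (h4 : ∀ i j k l : Fin N, Integrable (fun ψ => ψ i * ψ j * ψ k * ψ l) μ)
    (a b c d : Fin N → ℝ) :
    Integrable (fun ψ => (a ⬝ᵥ ψ) * (b ⬝ᵥ ψ) * (c ⬝ᵥ ψ) * (d ⬝ᵥ ψ)) μ := by
  have h : (fun ψ : Fin N → ℝ => (a ⬝ᵥ ψ) * (b ⬝ᵥ ψ) * (c ⬝ᵥ ψ) * (d ⬝ᵥ ψ))
      = fun ψ => ∑ i, ∑ j, ∑ k, ∑ l, (a l * b k * c j * d i) * (ψ i * ψ j * ψ k * ψ l) := by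
    funext ψ
    simp only [dotProduct, Finset.sum_mul, Finset.mul_sum]
    refine Finset.sum_congr rfl fun i _ => Finset.sum_congr rfl fun j _ =>
      Finset.sum_congr rfl fun k _ => Finset.sum_congr rfl fun l _ => by ring
  rw [h]
  exact integrable_finset_sum _ fun i _ => integrable_finset_sum _ fun j _ =>
    integrable_finset_sum _ fun k _ => integrable_finset_sum _ fun l _ =>
      (h4 i j k l).const_mul _

lemma abs_le_sq_add_one (x : ℝ) : |x| ≤ x ^ 2 + 1 := by
  nlinarith [sq_nonneg (|x| - 1), sq_abs x, abs_nonneg x]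

lemma int2 (h4 : ∀ i j k l : Fin N, Integrable (fun ψ => ψ i * ψ j * ψ k * ψ l) μ)
    (a b : Fin N → ℝ) :
    Integrable (fun ψ => (a ⬝ᵥ ψ) * (b ⬝ᵥ ψ)) μ := by
  have hsq : Integrable (fun ψ => ((a ⬝ᵥ ψ) * (b ⬝ᵥ ψ)) ^ 2) μ := by
    have he : (fun ψ : Fin N → ℝ => ((a ⬝ᵥ ψ) * (b ⬝ᵥ ψ)) ^ 2)
        = fun ψ => (a ⬝ᵥ ψ) * (b ⬝ᵥ ψ) * (a ⬝ᵥ ψ) * (b ⬝ᵥ ψ) := by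
      funext ψ; ring
    rw [he]; exact int4 h4 a b a b
  refine (hsq.add (integrable_const 1)).mono'
    (((meas_dot a).mul (meas_dot b)).aestronglyMeasurable)
    (Filter.Eventually.of_forall fun ψ => ?_)
  have h := abs_le_sq_add_one ((a ⬝ᵥ ψ) * (b ⬝ᵥ ψ))
  rw [abs_mul] at h
  simpa [Real.norm_eq_abs] using h

lemma intpair (h4 : ∀ i j k l : Fin N, Integrable (fun ψ => ψ i * ψ j * ψ k * ψ l) μ)
    (i j : Fin N) : Integrable (fun ψ => ψ i * ψ j) μ := by
  have h := int2 h4 (Pi.single i 1) (Pi.single j 1)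
  simpa using h

lemma intq (h4 : ∀ i j k l : Fin N, Integrable (fun ψ => ψ i * ψ j * ψ k * ψ l) μ)
    (C : Matrix (Fin N) (Fin N) ℝ) (i j : Fin N) :
    Integrable (fun ψ => ψ i * (ψ ⬝ᵥ C *ᵥ ψ) * ψ j) μ := by
  have h : (fun ψ : Fin N → ℝ => ψ i * (ψ ⬝ᵥ C *ᵥ ψ) * ψ j)
      = fun ψ => ∑ k, ∑ l, C k l * (ψ i * ψ k * ψ l * ψ j) := by
    funext ψ
    simp only [dotProduct, mulVec, Finset.mul_sum, Finset.sum_mul]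
    refine Finset.sum_congr rfl fun k _ => Finset.sum_congr rfl fun l _ => by ring
  rw [h]
  exact integrable_finset_sum _ fun k _ => integrable_finset_sum _ fun l _ =>
    (h4 i k l j).const_mul _

lemma sq_integral_le (f : (Fin N → ℝ) → ℝ) (hf : Integrable f μ)
    (hf2 : Integrable (fun ψ => f ψ ^ 2) μ) :
    (∫ ψ, f ψ ∂μ) ^ 2 ≤ ∫ ψ, f ψ ^ 2 ∂μ := by
  set c := ∫ ψ, f ψ ∂μ with hc
  have h0 : 0 ≤ ∫ ψ, (f ψ - c) ^ 2 ∂μ := integral_nonneg fun ψ => sq_nonneg _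
  have he : (fun ψ => (f ψ - c) ^ 2) = fun ψ => (f ψ ^ 2 - (2 * c) * f ψ) + c ^ 2 := by
    funext ψ; ring
  have h1 : Integrable (fun ψ => f ψ ^ 2 - 2 * c * f ψ) μ := hf2.sub (hf.const_mul (2 * c))
  have h2 : ∫ ψ, (f ψ ^ 2 - 2 * c * f ψ + c ^ 2) ∂μ
      = (∫ ψ, f ψ ^ 2 ∂μ) - 2 * c * c + c ^ 2 := by
    rw [integral_add h1 (integrable_const _), integral_sub hf2 (hf.const_mul (2 * c)),
      integral_const_mul, integral_const]
    simp [measure_univ, ← hc]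
  rw [he, h2] at h0
  nlinarith [h0]

lemma posSemidef_of_real {M : Matrix (Fin N) (Fin N) ℝ} (hsym : Mᵀ = M)
    (h : ∀ x, 0 ≤ x ⬝ᵥ M *ᵥ x) : M.PosSemidef := by
  refine Matrix.PosSemidef.of_dotProduct_mulVec_nonneg ?_ (fun x => by simpa using h x)
  rwa [Matrix.IsHermitian, conjTranspose_eq_transpose_of_trivial]

lemma quad_nonneg {M : Matrix (Fin N) (Fin N) ℝ} (hM : M.PosSemidef) (x : Fin N → ℝ) :
    0 ≤ x ⬝ᵥ M *ᵥ x := by simpa using hM.dotProduct_mulVec_nonneg x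

lemma sym_of_psd {M : Matrix (Fin N) (Fin N) ℝ} (hM : M.PosSemidef) : Mᵀ = M := by
  have h := hM.isHermitian.eq
  rwa [conjTranspose_eq_transpose_of_trivial] at h

lemma psd_add {M P : Matrix (Fin N) (Fin N) ℝ} (hM : M.PosSemidef) (hP : P.PosSemidef) :
    (M + P).PosSemidef := by
  refine posSemidef_of_real ?_ fun x => ?_
  · rw [transpose_add, sym_of_psd hM, sym_of_psd hP]
  · rw [add_mulVec, dotProduct_add]
    exact add_nonneg (quad_nonneg hM x) (quad_nonneg hP x)

lemma psd_smul {M : Matrix (Fin N) (Fin N) ℝ} (hM : M.PosSemidef) {c : ℝ} (hc : 0 ≤ c) :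
    (c • M).PosSemidef := by
  refine posSemidef_of_real ?_ fun x => ?_
  · rw [transpose_smul, sym_of_psd hM]
  · rw [smul_mulVec, dotProduct_smul, smul_eq_mul]
    exact mul_nonneg hc (quad_nonneg hM x)

lemma int4sq (h4 : ∀ i j k l : Fin N, Integrable (fun ψ => ψ i * ψ j * ψ k * ψ l) μ)
    (a b : Fin N → ℝ) :
    Integrable (fun ψ => ((a ⬝ᵥ ψ) * (b ⬝ᵥ ψ)) ^ 2) μ := by
  have he : (fun ψ : Fin N → ℝ => ((a ⬝ᵥ ψ) * (b ⬝ᵥ ψ)) ^ 2)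
      = fun ψ => (a ⬝ᵥ ψ) * (b ⬝ᵥ ψ) * (a ⬝ᵥ ψ) * (b ⬝ᵥ ψ) := by
    funext ψ; ring
  rw [he]; exact int4 h4 a b a b

lemma dot_S_eq_integral (S : Matrix (Fin N) (Fin N) ℝ)
    (hS : ∀ i j, S i j = ∫ ψ, ψ i * ψ j ∂μ)
    (h4 : ∀ i j k l : Fin N, Integrable (fun ψ => ψ i * ψ j * ψ k * ψ l) μ)
    (a x : Fin N → ℝ) :
    a ⬝ᵥ (S *ᵥ x) = ∫ ψ, (a ⬝ᵥ ψ) * (x ⬝ᵥ ψ) ∂μ := by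
  have h1 : a ⬝ᵥ (S *ᵥ x) = ∑ i, ∑ j, ∫ ψ, (a i * x j) * (ψ i * ψ j) ∂μ := by
    simp only [dotProduct, mulVec, hS, Finset.mul_sum]
    refine Finset.sum_congr rfl fun i _ => Finset.sum_congr rfl fun j _ => ?_
    rw [integral_const_mul]; ring
  rw [h1]
  have h2 : ∀ i : Fin N, (∑ j, ∫ ψ, (a i * x j) * (ψ i * ψ j) ∂μ)
      = ∫ ψ, ∑ j, (a i * x j) * (ψ i * ψ j) ∂μ := fun i =>
    (integral_finset_sum _ fun j _ => (intpair h4 i j).const_mul _).symm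
  simp only [h2]
  rw [← integral_finset_sum _ fun i _ =>
    integrable_finset_sum _ fun j _ => (intpair h4 i j).const_mul _]
  have h3 : ∀ ψ : Fin N → ℝ, (∑ i, ∑ j, (a i * x j) * (ψ i * ψ j))
      = (a ⬝ᵥ ψ) * (x ⬝ᵥ ψ) := by
    intro ψ
    rw [dotProduct, dotProduct, Finset.sum_mul_sum]
    exact Finset.sum_congr rfl fun i _ => Finset.sum_congr rfl fun j _ => by ring
  simp only [h3]

lemma quadE (h4 : ∀ i j k l : Fin N, Integrable (fun ψ => ψ i * ψ j * ψ k * ψ l) μ)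
    (C : Matrix (Fin N) (Fin N) ℝ) (x : Fin N → ℝ) :
    x ⬝ᵥ ((Matrix.of fun i j => ∫ ψ, ψ i * (ψ ⬝ᵥ C *ᵥ ψ) * ψ j ∂μ) *ᵥ x)
      = ∫ ψ, (x ⬝ᵥ ψ) * (x ⬝ᵥ ψ) * (ψ ⬝ᵥ C *ᵥ ψ) ∂μ := by
  have h1 : x ⬝ᵥ ((Matrix.of fun i j => ∫ ψ, ψ i * (ψ ⬝ᵥ C *ᵥ ψ) * ψ j ∂μ) *ᵥ x)
      = ∑ i, ∑ j, ∫ ψ, (x i * x j) * (ψ i * (ψ ⬝ᵥ C *ᵥ ψ) * ψ j) ∂μ := by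
    simp only [dotProduct, mulVec, Matrix.of_apply, Finset.mul_sum]
    refine Finset.sum_congr rfl fun i _ => Finset.sum_congr rfl fun j _ => ?_
    rw [integral_const_mul]; ring
  rw [h1]
  have h2 : ∀ i : Fin N, (∑ j, ∫ ψ, (x i * x j) * (ψ i * (ψ ⬝ᵥ C *ᵥ ψ) * ψ j) ∂μ)
      = ∫ ψ, ∑ j, (x i * x j) * (ψ i * (ψ ⬝ᵥ C *ᵥ ψ) * ψ j) ∂μ := fun i =>
    (integral_finset_sum _ fun j _ => (intq h4 C i j).const_mul _).symm
  simp only [h2]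
  rw [← integral_finset_sum _ fun i _ =>
    integrable_finset_sum _ fun j _ => (intq h4 C i j).const_mul _]
  have h3 : ∀ ψ : Fin N → ℝ, (∑ i, ∑ j, (x i * x j) * (ψ i * (ψ ⬝ᵥ C *ᵥ ψ) * ψ j))
      = (x ⬝ᵥ ψ) * (x ⬝ᵥ ψ) * (ψ ⬝ᵥ C *ᵥ ψ) := by
    intro ψ
    set q := ψ ⬝ᵥ C *ᵥ ψ with hqd
    have hxx : (x ⬝ᵥ ψ) * (x ⬝ᵥ ψ) = ∑ i, ∑ j, (x i * ψ i) * (x j * ψ j) := by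
      rw [dotProduct, Finset.sum_mul_sum]
    rw [hxx, Finset.sum_mul]
    refine Finset.sum_congr rfl fun i _ => ?_
    rw [Finset.sum_mul]
    exact Finset.sum_congr rfl fun j _ => by ring
  simp only [h3]

lemma vecMulVec_mulVec_apply (a b y : Fin N → ℝ) (k : Fin N) :
    (vecMulVec a b *ᵥ y) k = a k * (b ⬝ᵥ y) := by
  simp only [mulVec, dotProduct, vecMulVec_apply, Finset.mul_sum]
  exact Finset.sum_congr rfl fun j _ => by ring

lemma dot_vecMulVec (a b x y : Fin N → ℝ) :
    x ⬝ᵥ (vecMulVec a b *ᵥ y) = (x ⬝ᵥ a) * (b ⬝ᵥ y) := by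
  calc x ⬝ᵥ (vecMulVec a b *ᵥ y) = ∑ i, x i * (a i * (b ⬝ᵥ y)) := by
        rw [dotProduct]
        exact Finset.sum_congr rfl fun i _ => by rw [vecMulVec_mulVec_apply]
    _ = (x ⬝ᵥ a) * (b ⬝ᵥ y) := by
        conv_rhs => rw [dotProduct, Finset.sum_mul]
        exact Finset.sum_congr rfl fun i _ => by ring

lemma vecMulVec_mulVec' (a b y : Fin N → ℝ) :
    vecMulVec a b *ᵥ y = (b ⬝ᵥ y) • a := by
  funext k
  rw [vecMulVec_mulVec_apply, Pi.smul_apply, smul_eq_mul, mul_comm]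

lemma psd_vecMulVec (Δ : Fin N → ℝ) : (vecMulVec Δ Δ).PosSemidef := by
  refine posSemidef_of_real ?_ fun x => ?_
  · ext i j; simp [vecMulVec_apply, mul_comm]
  · rw [dot_vecMulVec, dotProduct_comm]
    exact mul_self_nonneg _

lemma trace_vecMulVec_mul (a : Fin N → ℝ) (M : Matrix (Fin N) (Fin N) ℝ) :
    (vecMulVec a a * M).trace = a ⬝ᵥ (M *ᵥ a) := by
  simp only [Matrix.trace, Matrix.diag, Matrix.mul_apply, vecMulVec_apply,
    dotProduct, mulVec, Finset.mul_sum]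
  rw [Finset.sum_comm]
  exact Finset.sum_congr rfl fun j _ => Finset.sum_congr rfl fun i _ => by ring

lemma E_sub_SCS_psd (h4 : ∀ i j k l : Fin N, Integrable (fun ψ => ψ i * ψ j * ψ k * ψ l) μ)
    (S : Matrix (Fin N) (Fin N) ℝ) (hS : ∀ i j, S i j = ∫ ψ, ψ i * ψ j ∂μ)
    (hSsym : Sᵀ = S)
    {C : Matrix (Fin N) (Fin N) ℝ} (hC : C.PosSemidef) :
    ((Matrix.of fun i j => ∫ ψ, ψ i * (ψ ⬝ᵥ C *ᵥ ψ) * ψ j ∂μ) - S * C * S).PosSemidef := by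
  open scoped MatrixOrder in
  have hBB : CFC.sqrt C * CFC.sqrt C = C := CFC.sqrt_mul_sqrt_self C hC.nonneg
  open scoped MatrixOrder in
  set B := CFC.sqrt C with hBdef
  open scoped MatrixOrder in
  have hBsym : Bᵀ = B := sym_of_psd (CFC.sqrt_nonneg C).posSemidef
  have hswap : ∀ (M : Matrix (Fin N) (Fin N) ℝ), Mᵀ = M → ∀ y : Fin N → ℝ, y ᵥ* M = M *ᵥ y := by
    intro M hM y; rw [← mulVec_transpose, hM]
  have hq : ∀ y : Fin N → ℝ, y ⬝ᵥ C *ᵥ y = ∑ r, (B r ⬝ᵥ y) ^ 2 := by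
    intro y
    rw [← hBB, ← mulVec_mulVec, dotProduct_mulVec, hswap B hBsym]
    simp only [dotProduct, mulVec, sq]
  refine posSemidef_of_real ?_ fun x => ?_
  · rw [transpose_sub, Matrix.transpose_mul, Matrix.transpose_mul, hSsym, sym_of_psd hC,
      ← Matrix.mul_assoc]
    congr 1
    ext i j
    simp only [transpose_apply, Matrix.of_apply]
    congr 1; funext ψ; ring
  · rw [sub_mulVec, dotProduct_sub, quadE h4 C x]
    have hxSCS : x ⬝ᵥ ((S * C * S) *ᵥ x)
        = ∑ r, (∫ ψ, (B r ⬝ᵥ ψ) * (x ⬝ᵥ ψ) ∂μ) ^ 2 := by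
      rw [← mulVec_mulVec, ← mulVec_mulVec, dotProduct_mulVec, hswap S hSsym, hq (S *ᵥ x)]
      exact Finset.sum_congr rfl fun r _ => by rw [dot_S_eq_integral S hS h4 (B r) x]
    have hsplit : ∫ ψ, (x ⬝ᵥ ψ) * (x ⬝ᵥ ψ) * (ψ ⬝ᵥ C *ᵥ ψ) ∂μ
        = ∑ r, ∫ ψ, ((B r ⬝ᵥ ψ) * (x ⬝ᵥ ψ)) ^ 2 ∂μ := by
      rw [← integral_finset_sum _ fun r _ => int4sq h4 (B r) x]
      congr 1; funext ψ
      rw [hq ψ, Finset.mul_sum]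
      exact Finset.sum_congr rfl fun r _ => by ring
    rw [hxSCS, hsplit, ← Finset.sum_sub_distrib]
    refine Finset.sum_nonneg fun r _ => sub_nonneg.mpr ?_
    exact sq_integral_le _ (int2 h4 (B r) x) (int4sq h4 (B r) x)

end SGDAux

/-- Let `μ` be a probability distribution on `ℝ^N` with finite fourth
moments and second-moment matrix `S = ∑ₖ λₖ uₖ uₖᵀ` (`u₁,…,u_N` orthonormal, `λₖ ≥ 0`).
Suppose there is `α ≥ 1` such that for every PSD symmetric `G`,
`E[ψψᵀ G ψψᵀ] ⪯ (α+1) S G S + α Tr(S G) S` (Loewner order).  If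
`C_{t+1} = C_t − η S C_t − η C_t S + η²((m−1)/m) S C_t S + (η²/m) E[ψψᵀ C_t ψψᵀ]` with
`C₀ = Δ Δᵀ` and `vₖ = uₖᵀ Δ`, then for all `t`,
`Tr(S C_t) ≤ λᵀ A_α^t v²` where
`A_α = (I − η diag(λ))² + (α η²/m)[diag(λ²) + λλᵀ]`. -/
theorem sgd_loss_regular_fourth_moment_bound
    (N : ℕ) (hN : 1 ≤ N) (μ : Measure (Fin N → ℝ)) [IsProbabilityMeasure μ]
    (h4 : ∀ i j k l : Fin N, Integrable (fun ψ => ψ i * ψ j * ψ k * ψ l) μ)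
    (u : Fin N → (Fin N → ℝ))
    (hu : ∀ k l, u k ⬝ᵥ u l = if k = l then (1 : ℝ) else 0)
    (lam : Fin N → ℝ) (hlam : ∀ k, 0 ≤ lam k)
    (S : Matrix (Fin N) (Fin N) ℝ)
    (hS : ∀ i j, S i j = ∫ ψ, ψ i * ψ j ∂μ)
    (hSdiag : S = ∑ k, lam k • vecMulVec (u k) (u k))
    (α : ℝ) (hα : 1 ≤ α)
    (hreg : ∀ G : Matrix (Fin N) (Fin N) ℝ, G.PosSemidef →
      (((α + 1) • (S * G * S) + (α * (S * G).trace) • S)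
        - Matrix.of (fun i j => ∫ ψ, ψ i * (ψ ⬝ᵥ G.mulVec ψ) * ψ j ∂μ)).PosSemidef)
    (η : ℝ) (hη : 0 < η) (m : ℕ) (hm : 1 ≤ m)
    (Δ : Fin N → ℝ) (C : ℕ → Matrix (Fin N) (Fin N) ℝ)
    (hC0 : C 0 = vecMulVec Δ Δ)
    (hrec : ∀ t, C (t + 1) = C t - η • (S * C t) - η • (C t * S)
        + (η ^ 2 * ((m : ℝ) - 1) / m) • (S * C t * S)
        + (η ^ 2 / m) • Matrix.of (fun i j => ∫ ψ, ψ i * (ψ ⬝ᵥ (C t).mulVec ψ) * ψ j ∂μ)) :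
    ∀ t : ℕ,
      (S * C t).trace
        ≤ lam ⬝ᵥ (((1 - η • Matrix.diagonal lam) ^ 2
            + (α * η ^ 2 / m) • (Matrix.diagonal (fun k => (lam k) ^ 2) + vecMulVec lam lam))
              ^ t).mulVec (fun k => (u k ⬝ᵥ Δ) ^ 2) := by
  classical
  open SGDAux in
  -- basic scalars
  have hm0 : (0:ℝ) < (m:ℝ) := by exact_mod_cast Nat.lt_of_lt_of_le Nat.zero_lt_one hm
  have hα0 : (0:ℝ) < α := lt_of_lt_of_le one_pos hα
  have hc0 : 0 ≤ α * η ^ 2 / m := by positivity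
  have hηm0 : 0 ≤ η ^ 2 / m := by positivity
  -- symmetry of S
  have hSsym : Sᵀ = S := by
    rw [hSdiag]
    ext i j
    simp only [transpose_apply, Matrix.sum_apply, Matrix.smul_apply, vecMulVec_apply,
      smul_eq_mul]
    exact Finset.sum_congr rfl fun k _ => by ring
  -- eigen relations
  have hSu : ∀ k, S *ᵥ u k = lam k • u k := by
    intro k
    rw [hSdiag]
    have h1 : (∑ j, lam j • vecMulVec (u j) (u j)) *ᵥ u k
        = ∑ j, lam j • (vecMulVec (u j) (u j) *ᵥ u k) := by
      funext i
      simp only [mulVec, dotProduct, Matrix.sum_apply, Matrix.smul_apply, vecMulVec_apply,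
        smul_eq_mul, Finset.sum_mul, Finset.sum_apply, Pi.smul_apply]
      rw [Finset.sum_comm]
      refine Finset.sum_congr rfl fun j _ => ?_
      rw [Finset.mul_sum]
      exact Finset.sum_congr rfl fun l _ => by ring
    rw [h1]
    have h2 : ∀ j, lam j • (vecMulVec (u j) (u j) *ᵥ u k)
        = if j = k then lam k • u k else 0 := by
      intro j
      rw [SGDAux.vecMulVec_mulVec', hu]
      by_cases h : j = k
      · subst h; simp
      · simp [h]
    simp only [h2]
    simp [Finset.sum_ite_eq', Finset.mem_univ]
  have hswapS : ∀ y : Fin N → ℝ, y ᵥ* S = S *ᵥ y := fun y => by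
    rw [← mulVec_transpose, hSsym]
  have hdotS : ∀ (k) (z : Fin N → ℝ), u k ⬝ᵥ (S *ᵥ z) = lam k * (u k ⬝ᵥ z) := by
    intro k z
    rw [dotProduct_mulVec, hswapS, hSu, smul_dotProduct, smul_eq_mul]
  -- trace formula
  have htr : ∀ t, (S * C t).trace = ∑ k, lam k * (u k ⬝ᵥ (C t *ᵥ u k)) := by
    intro t
    rw [hSdiag, Finset.sum_mul]
    rw [Matrix.trace_sum]
    refine Finset.sum_congr rfl fun k _ => ?_
    rw [smul_mul_assoc, Matrix.trace_smul, SGDAux.trace_vecMulVec_mul, smul_eq_mul]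
  -- quadratic form terms
  have hterm1 : ∀ t k, u k ⬝ᵥ ((S * C t) *ᵥ u k) = lam k * (u k ⬝ᵥ (C t *ᵥ u k)) := by
    intro t k; rw [← mulVec_mulVec, hdotS]
  have hterm2 : ∀ t k, u k ⬝ᵥ ((C t * S) *ᵥ u k) = lam k * (u k ⬝ᵥ (C t *ᵥ u k)) := by
    intro t k
    rw [← mulVec_mulVec, hSu, mulVec_smul, dotProduct_smul, smul_eq_mul]
  have hterm3 : ∀ t k, u k ⬝ᵥ ((S * C t * S) *ᵥ u k)
      = lam k ^ 2 * (u k ⬝ᵥ (C t *ᵥ u k)) := by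
    intro t k
    rw [← mulVec_mulVec, hSu, mulVec_smul, dotProduct_smul, smul_eq_mul, hterm1]
    ring
  have hdotSuu : ∀ k, u k ⬝ᵥ (S *ᵥ u k) = lam k := by
    intro k; rw [hdotS, hu]; simp
  -- the iteration matrix
  set Aα := (1 - η • Matrix.diagonal lam) ^ 2
      + (α * η ^ 2 / m) • (Matrix.diagonal (fun k => (lam k) ^ 2) + vecMulVec lam lam)
    with hAαdef
  set v2 : Fin N → ℝ := fun k => (u k ⬝ᵥ Δ) ^ 2 with hv2def
  have hdiag1 : (1 - η • Matrix.diagonal lam)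
      = Matrix.diagonal (fun k => 1 - η * lam k) := by
    ext i j
    by_cases h : i = j
    · subst h
      simp [Matrix.one_apply, Matrix.diagonal_apply]
    · simp [Matrix.one_apply_ne h, Matrix.diagonal_apply_ne _ h, h]
  have hA2 : (1 - η • Matrix.diagonal lam) ^ 2
      = Matrix.diagonal (fun k => (1 - η * lam k) ^ 2) := by
    rw [hdiag1, sq, diagonal_mul_diagonal]
    ext i j
    by_cases h : i = j
    · subst h; simp [Matrix.diagonal_apply_eq, sq]
    · simp [Matrix.diagonal_apply_ne _ h]
  have hAapply : ∀ (y : Fin N → ℝ) (k), (Aα *ᵥ y) k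
      = (1 - η * lam k) ^ 2 * y k
        + (α * η ^ 2 / m) * ((lam k) ^ 2 * y k + lam k * (lam ⬝ᵥ y)) := by
    intro y k
    rw [hAαdef, add_mulVec, hA2, smul_mulVec, add_mulVec, Pi.add_apply, Pi.smul_apply,
      Pi.add_apply, mulVec_diagonal, mulVec_diagonal, SGDAux.vecMulVec_mulVec_apply,
      smul_eq_mul]
  -- main induction
  have key : ∀ t, (C t).PosSemidef ∧ ∀ k, u k ⬝ᵥ (C t *ᵥ u k) ≤ ((Aα ^ t) *ᵥ v2) k := by
    intro t
    induction t with
    | zero =>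
      constructor
      · rw [hC0]; exact SGDAux.psd_vecMulVec Δ
      · intro k
        rw [hC0, pow_zero, one_mulVec, SGDAux.dot_vecMulVec, dotProduct_comm Δ (u k)]
        rw [hv2def, ← sq]
    | succ t ih =>
      obtain ⟨hpsd, hble⟩ := ih
      -- positive semidefiniteness of C (t+1)
      have hkey := SGDAux.E_sub_SCS_psd h4 S hS hSsym hpsd
      have e1 : (1 - η • S) * C t * (1 - η • S)
          = C t - η • (S * C t) - η • (C t * S) + (η * η) • (S * C t * S) := by
        simp only [sub_mul, mul_sub, one_mul, mul_one, smul_mul_assoc, mul_smul_comm,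
          smul_smul, smul_sub]
        abel
      have hcoef : (η * η) • (S * C t * S)
          = (η ^ 2 * ((m:ℝ) - 1) / m) • (S * C t * S) + (η ^ 2 / m) • (S * C t * S) := by
        rw [← add_smul]
        congr 1
        field_simp
        ring
      have hident : C (t + 1)
          = (1 - η • S) * C t * (1 - η • S)
            + (η ^ 2 / m) • ((Matrix.of fun i j => ∫ ψ, ψ i * (ψ ⬝ᵥ (C t) *ᵥ ψ) * ψ j ∂μ)
              - S * C t * S) := by
        rw [hrec t, e1, smul_sub, hcoef]
        abel
      have hconj : ((1 - η • S) * C t * (1 - η • S)).PosSemidef := by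
        have h := hpsd.mul_mul_conjTranspose_same (1 - η • S)
        have hct : (1 - η • S)ᴴ = 1 - η • S := by
          rw [conjTranspose_eq_transpose_of_trivial, transpose_sub, transpose_one,
            transpose_smul, hSsym]
        rwa [hct] at h
      have hpsd' : (C (t + 1)).PosSemidef := by
        rw [hident]
        exact SGDAux.psd_add hconj (SGDAux.psd_smul hkey hηm0)
      refine ⟨hpsd', fun k => ?_⟩
      -- recursion for the diagonal coefficients
      have hwrec : u k ⬝ᵥ (C (t + 1) *ᵥ u k)
          = (1 - 2 * η * lam k + η ^ 2 * ((m:ℝ) - 1) / m * lam k ^ 2)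
              * (u k ⬝ᵥ (C t *ᵥ u k))
            + (η ^ 2 / m) * (u k ⬝ᵥ ((Matrix.of fun i j =>
                ∫ ψ, ψ i * (ψ ⬝ᵥ (C t) *ᵥ ψ) * ψ j ∂μ) *ᵥ u k)) := by
        rw [hrec t]
        simp only [add_mulVec, sub_mulVec, smul_mulVec, dotProduct_add,
          dotProduct_sub, dotProduct_smul, smul_eq_mul, hterm1, hterm2, hterm3]
        ring
      -- bound on the E-term
      have hEb : u k ⬝ᵥ ((Matrix.of fun i j =>
            ∫ ψ, ψ i * (ψ ⬝ᵥ (C t) *ᵥ ψ) * ψ j ∂μ) *ᵥ u k)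
          ≤ (α + 1) * (lam k ^ 2 * (u k ⬝ᵥ (C t *ᵥ u k)))
            + α * (∑ j, lam j * (u j ⬝ᵥ (C t *ᵥ u j))) * lam k := by
        have hD := hreg (C t) hpsd
        have h0 := SGDAux.quad_nonneg hD (u k)
        rw [sub_mulVec, dotProduct_sub, add_mulVec, smul_mulVec, smul_mulVec,
          dotProduct_add, dotProduct_smul, dotProduct_smul, hterm3, hdotSuu,
          htr t] at h0
        simp only [smul_eq_mul] at h0
        linarith
      -- assemble
      have hT : (∑ j, lam j * (u j ⬝ᵥ (C t *ᵥ u j))) ≤ lam ⬝ᵥ ((Aα ^ t) *ᵥ v2) := by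
        rw [dotProduct]
        exact Finset.sum_le_sum fun j _ =>
          mul_le_mul_of_nonneg_left (hble j) (hlam j)
      have hpow : ((Aα ^ (t + 1)) *ᵥ v2) k = (Aα *ᵥ ((Aα ^ t) *ᵥ v2)) k := by
        rw [pow_succ', ← mulVec_mulVec]
      rw [hpow, hAapply]
      rw [hwrec]
      have step1 : (1 - 2 * η * lam k + η ^ 2 * ((m:ℝ) - 1) / m * lam k ^ 2)
              * (u k ⬝ᵥ (C t *ᵥ u k))
            + (η ^ 2 / m) * (u k ⬝ᵥ ((Matrix.of fun i j =>
                ∫ ψ, ψ i * (ψ ⬝ᵥ (C t) *ᵥ ψ) * ψ j ∂μ) *ᵥ u k))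
          ≤ (1 - η * lam k) ^ 2 * (u k ⬝ᵥ (C t *ᵥ u k))
            + (α * η ^ 2 / m) * ((lam k) ^ 2 * (u k ⬝ᵥ (C t *ᵥ u k))
              + lam k * (∑ j, lam j * (u j ⬝ᵥ (C t *ᵥ u j)))) := by
        have h2 := mul_le_mul_of_nonneg_left hEb hηm0
        have hid : (1 - 2 * η * lam k + η ^ 2 * ((m:ℝ) - 1) / m * lam k ^ 2)
                * (u k ⬝ᵥ (C t *ᵥ u k))
              + (η ^ 2 / m) * ((α + 1) * (lam k ^ 2 * (u k ⬝ᵥ (C t *ᵥ u k)))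
                + α * (∑ j, lam j * (u j ⬝ᵥ (C t *ᵥ u j))) * lam k)
            = (1 - η * lam k) ^ 2 * (u k ⬝ᵥ (C t *ᵥ u k))
              + (α * η ^ 2 / m) * ((lam k) ^ 2 * (u k ⬝ᵥ (C t *ᵥ u k))
                + lam k * (∑ j, lam j * (u j ⬝ᵥ (C t *ᵥ u j)))) := by
          field_simp
          ring
        linarith
      refine le_trans step1 ?_
      have hw2 : u k ⬝ᵥ (C t *ᵥ u k) ≤ ((Aα ^ t) *ᵥ v2) k := hble k
      have h1 : (1 - η * lam k) ^ 2 * (u k ⬝ᵥ (C t *ᵥ u k))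
          ≤ (1 - η * lam k) ^ 2 * ((Aα ^ t) *ᵥ v2) k :=
        mul_le_mul_of_nonneg_left hw2 (sq_nonneg _)
      have h2 : (lam k) ^ 2 * (u k ⬝ᵥ (C t *ᵥ u k)) ≤ (lam k) ^ 2 * ((Aα ^ t) *ᵥ v2) k :=
        mul_le_mul_of_nonneg_left hw2 (sq_nonneg _)
      have h3 : lam k * (∑ j, lam j * (u j ⬝ᵥ (C t *ᵥ u j)))
          ≤ lam k * (lam ⬝ᵥ ((Aα ^ t) *ᵥ v2)) :=
        mul_le_mul_of_nonneg_left hT (hlam k)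
      have h4' := mul_le_mul_of_nonneg_left (add_le_add h2 h3) hc0
      linarith
  -- conclusion
  intro t
  rw [htr t]
  calc (∑ k, lam k * (u k ⬝ᵥ (C t *ᵥ u k)))
      ≤ ∑ k, lam k * ((Aα ^ t) *ᵥ v2) k :=
        Finset.sum_le_sum fun k _ => mul_le_mul_of_nonneg_left ((key t).2 k) (hlam k)
    _ = lam ⬝ᵥ ((Aα ^ t) *ᵥ v2) := by rw [dotProduct]
end

section
/- Let N ≥ 1, λ, v ∈ ℝ^N with λ having nonnegative entries, η > 0, m > 0, σ ≥ 0, and set A = A(λ,η,m). Suppose every eigenvalue of the symmetric matrix A has absolute value strictly less than 1, and suppose (c_t)_{t∈ℕ} satisfies c_{t+1} = A c_t + (η² σ²/m) λ with c₀ = v². Then I − A is invertible, A^t → 0 as t → ∞, and λᵀ c_t converges to (η² σ²/m) · λᵀ (I − A)^{-1} λ as t → ∞. -/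
open Matrix Filter

lemma smul_isHermitian {N : ℕ} (c : ℝ) {M : Matrix (Fin N) (Fin N) ℝ}
    (hM : M.IsHermitian) : (c • M).IsHermitian := by
  unfold Matrix.IsHermitian
  rw [Matrix.conjTranspose_smul, star_trivial, hM.eq]

lemma Amat_isHermitian (N : ℕ) (lam : Fin N → ℝ) (η m : ℝ) :
    (Amat N lam η m).IsHermitian := by
  have hvv : (vecMulVec lam lam).IsHermitian := by
    unfold Matrix.IsHermitian
    ext i j
    simp [Matrix.conjTranspose_apply, Matrix.vecMulVec_apply, mul_comm]
  exact ((((Matrix.isHermitian_one.sub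
      (smul_isHermitian η (Matrix.isHermitian_diagonal lam))).pow 2).add
      (smul_isHermitian _ (Matrix.isHermitian_diagonal _))).add
      (smul_isHermitian _ hvv))

/-- With `A = A(λ,η,m)`, suppose every eigenvalue of the symmetric matrix
`A` has absolute value strictly less than `1`, and `c_{t+1} = A c_t + (η² σ²/m) λ` with
`c₀ = v²`.  Then `I − A` is invertible, `A^t → 0`, and
`λᵀ c_t → (η² σ²/m) λᵀ (I − A)⁻¹ λ` as `t → ∞`. -/
theorem noisy_sgd_asymptotic_loss
    (N : ℕ) (hN : 1 ≤ N) (lam v : Fin N → ℝ) (hlam : ∀ k, 0 ≤ lam k)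
    (η m σ : ℝ) (hη : 0 < η) (hm : 0 < m) (hσ : 0 ≤ σ)
    (hspec : ∀ r ∈ spectrum ℝ (Amat N lam η m), |r| < 1)
    (c : ℕ → Fin N → ℝ) (hc0 : c 0 = fun k => (v k) ^ 2)
    (hrec : ∀ t, c (t + 1) = (Amat N lam η m).mulVec (c t) + (η ^ 2 * σ ^ 2 / m) • lam) :
    IsUnit (1 - Amat N lam η m)
    ∧ Tendsto (fun t : ℕ => (Amat N lam η m) ^ t) atTop (nhds 0)
    ∧ Tendsto (fun t : ℕ => lam ⬝ᵥ c t) atTop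
        (nhds ((η ^ 2 * σ ^ 2 / m) * (lam ⬝ᵥ (1 - Amat N lam η m)⁻¹.mulVec lam))) := by
  set A := Amat N lam η m with hA
  have hherm : A.IsHermitian := Amat_isHermitian N lam η m
  clear_value A
  -- (1) I - A is invertible
  have h1 : IsUnit (1 - A) := by
    have h1spec : (1 : ℝ) ∉ spectrum ℝ A := fun h => by simpa using hspec 1 h
    rw [spectrum.notMem_iff] at h1spec
    simpa using h1spec
  -- (2) A ^ t → 0
  have h2 : Tendsto (fun t : ℕ => A ^ t) atTop (nhds 0) := by
    have hU := hherm.spectral_theorem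
    set U : Matrix (Fin N) (Fin N) ℝ := (hherm.eigenvectorUnitary : Matrix (Fin N) (Fin N) ℝ)
    have hUU : star U * U = 1 := Unitary.coe_star_mul_self hherm.eigenvectorUnitary
    have hAeq : A = U * Matrix.diagonal (fun i => hherm.eigenvalues i) * star U := by
      rw [Unitary.conjStarAlgAut_apply] at hU
      exact hU
    have key : ∀ d e : Fin N → ℝ,
        (U * Matrix.diagonal d * star U) * (U * Matrix.diagonal e * star U)
          = U * Matrix.diagonal (d * e) * star U := by
      intro d e
      simp only [mul_assoc]
      rw [← mul_assoc (star U) U, hUU, one_mul, ← mul_assoc (Matrix.diagonal d),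
        Matrix.diagonal_mul_diagonal]
      rfl
    have hpow : ∀ t : ℕ, A ^ t = U * Matrix.diagonal (fun i => hherm.eigenvalues i ^ t)
        * star U := by
      intro t
      induction t with
      | zero =>
        have h1' : Matrix.diagonal (fun i : Fin N => hherm.eigenvalues i ^ 0) = 1 := by
          have : (fun i : Fin N => hherm.eigenvalues i ^ 0) = fun _ => 1 := by
            funext i; simp
          rw [this]
          exact Matrix.diagonal_one
        rw [pow_zero, h1', mul_one]
        exact (Matrix.mem_unitaryGroup_iff.mp hherm.eigenvectorUnitary.2).symm
      | succ t ih =>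
        have hk := key (fun i => hherm.eigenvalues i ^ t) (fun i => hherm.eigenvalues i)
        rw [← hAeq] at hk
        have hfun : ((fun i => hherm.eigenvalues i ^ t) * fun i => hherm.eigenvalues i)
            = fun i => hherm.eigenvalues i ^ (t + 1) := by
          funext i
          exact (pow_succ _ _).symm
        rw [pow_succ, ih, hk, hfun]
    have hd : Tendsto (fun t : ℕ => (fun i => hherm.eigenvalues i ^ t)) atTop
        (nhds (0 : Fin N → ℝ)) := by
      rw [tendsto_pi_nhds]
      intro i
      have := hspec _ (hherm.eigenvalues_mem_spectrum_real i)
      exact tendsto_pow_atTop_nhds_zero_of_abs_lt_one this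
    have hcont : Continuous fun d : Fin N → ℝ => U * Matrix.diagonal d * star U :=
      ((continuous_const.matrix_mul (continuous_id.matrix_diagonal)).matrix_mul continuous_const)
    have hlim := (hcont.tendsto 0).comp hd
    have h0 : U * Matrix.diagonal (0 : Fin N → ℝ) * star U = 0 := by
      show U * Matrix.diagonal (fun _ : Fin N => (0 : ℝ)) * star U = 0
      simp
    rw [h0] at hlim
    have heq : (fun t : ℕ => A ^ t) = (fun d : Fin N → ℝ => U * Matrix.diagonal d * star U)
        ∘ (fun t : ℕ => fun i => hherm.eigenvalues i ^ t) := by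
      funext t; exact hpow t
    rw [heq]
    exact hlim
  refine ⟨h1, h2, ?_⟩
  -- (3) convergence of λᵀ c t
  have hdet : IsUnit (1 - A).det := (Matrix.isUnit_iff_isUnit_det _).mp h1
  have hinv : (1 - A)⁻¹ * (1 - A) = 1 := Matrix.nonsing_inv_mul _ hdet
  set b : Fin N → ℝ := (η ^ 2 * σ ^ 2 / m) • lam with hb
  -- closed form for c t
  have hct : ∀ t, c t = (A ^ t).mulVec (c 0) + ((∑ i ∈ Finset.range t, A ^ i)).mulVec b := by
    intro t
    induction t with
    | zero => simp
    | succ t ih =>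
      have hsum : (∑ i ∈ Finset.range (t + 1), A ^ i)
          = A * (∑ i ∈ Finset.range t, A ^ i) + 1 := by
        rw [Finset.sum_range_succ', Finset.mul_sum]
        simp [pow_succ']
      rw [hrec t, ih, hsum, pow_succ']
      simp only [Matrix.mulVec_add, Matrix.add_mulVec, Matrix.one_mulVec, Matrix.mulVec_mulVec]
      abel
  -- geometric sum formula
  have hgeom : ∀ t, (∑ i ∈ Finset.range t, A ^ i) = (1 - A)⁻¹ * (1 - A ^ t) := by
    intro t
    have h' : (1 - A) * (∑ i ∈ Finset.range t, A ^ i) = 1 - A ^ t := by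
      have hm' := mul_geom_sum A t
      calc (1 - A) * (∑ i ∈ Finset.range t, A ^ i)
          = -((A - 1) * ∑ i ∈ Finset.range t, A ^ i) := by rw [← neg_mul, neg_sub]
        _ = -(A ^ t - 1) := by rw [hm']
        _ = 1 - A ^ t := neg_sub _ _
    calc (∑ i ∈ Finset.range t, A ^ i)
        = ((1 - A)⁻¹ * (1 - A)) * (∑ i ∈ Finset.range t, A ^ i) := by rw [hinv, one_mul]
      _ = (1 - A)⁻¹ * (1 - A ^ t) := by rw [mul_assoc, h']
  -- express λᵀ c t as a continuous function of A^t
  have hexpr : (fun t : ℕ => lam ⬝ᵥ c t)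
      = (fun M : Matrix (Fin N) (Fin N) ℝ =>
          lam ⬝ᵥ (M.mulVec (c 0) + ((1 - A)⁻¹ * (1 - M)).mulVec b)) ∘ (fun t : ℕ => A ^ t) := by
    funext t
    simp only [Function.comp_apply, hct t, hgeom t]
  rw [hexpr]
  have hcont2 : Continuous fun M : Matrix (Fin N) (Fin N) ℝ =>
      lam ⬝ᵥ (M.mulVec (c 0) + ((1 - A)⁻¹ * (1 - M)).mulVec b) := by
    apply Continuous.dotProduct continuous_const
    exact ((continuous_id.matrix_mulVec continuous_const).add
      ((continuous_const.matrix_mul (continuous_const.sub continuous_id)).matrix_mulVec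
        continuous_const))
  have hfin := (hcont2.tendsto 0).comp h2
  convert hfin using 2
  simp [hb, Matrix.mulVec_smul, dotProduct_smul, mul_comm]
end

section
/- Let a > 1, b > 0, and 0 < η < 1, and for t ∈ ℕ define S(t) = Σ_{k=1}^∞ k^{-a} (1 − η k^{-b})^{2t} (the series converges since a > 1). Then there exist constants 0 < c₁ ≤ c₂ and T ∈ ℕ such that for all t ≥ T, c₁ · t^{-(a-1)/b} ≤ S(t) ≤ c₂ · t^{-(a-1)/b}. -/
lemma exp_neg_le_factorial_div_pow {y : ℝ} (hy : 0 < y) (n : ℕ) :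
    Real.exp (-y) ≤ (n.factorial : ℝ) / y ^ n := by
  have h1 : y ^ n / (n.factorial : ℝ) ≤ Real.exp y := by
    refine le_trans ?_ (Real.sum_le_exp_of_nonneg hy.le (n + 1))
    exact Finset.single_le_sum (f := fun i => y ^ i / (i.factorial : ℝ))
      (fun i _ => by positivity) (Finset.self_mem_range_succ n)
  have h2 : (0:ℝ) < y ^ n / (n.factorial : ℝ) := by positivity
  rw [Real.exp_neg, ← inv_div]
  exact inv_anti₀ h2 h1

lemma exp_neg_two_mul_le {x : ℝ} (h0 : 0 ≤ x) (h1 : x ≤ 1/2) :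
    Real.exp (-(2*x)) ≤ 1 - x := by
  have h := Real.add_one_le_exp (2*x)
  have hp := Real.exp_pos (2*x)
  rw [Real.exp_neg, inv_le_iff_one_le_mul₀ hp]
  nlinarith

lemma summable_aux {a : ℝ} (ha : 1 < a) :
    Summable (fun k : ℕ => ((k : ℝ) + 1) ^ (-a)) := by
  have h := Real.summable_nat_rpow.mpr (show -a < -1 by linarith)
  have h2 := (summable_nat_add_iff 1).mpr h
  refine h2.congr fun k => ?_
  push_cast
  ring_nf

lemma tail_bound {a : ℝ} (ha : 1 < a) {N : ℕ} (hN : 1 ≤ N) :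
    ∑' k : ℕ, ((N : ℝ) + (k : ℝ) + 1) ^ (-a) ≤ (N : ℝ) ^ (1 - a) / (a - 1) := by
  have hN0 : (1:ℝ) ≤ (N:ℝ) := by exact_mod_cast hN
  apply Real.tsum_le_of_sum_range_le (fun k => by positivity)
  intro m
  have key : ∑ i ∈ Finset.range m, (fun x : ℝ => x ^ (-a)) ((N:ℝ) + (i + 1 : ℕ))
      ≤ ∫ x in (N:ℝ)..((N:ℝ) + m), x ^ (-a) := by
    apply AntitoneOn.sum_le_integral (f := fun x : ℝ => x ^ (-a)) (x₀ := (N:ℝ)) (a := m)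
    intro x hx y hy hxy
    exact Real.rpow_le_rpow_of_nonpos (by linarith [hx.1]) hxy (by linarith)
  have hint : ∫ x in (N:ℝ)..((N:ℝ) + m), x ^ (-a)
      = (((N:ℝ) + m) ^ (-a + 1) - (N:ℝ) ^ (-a + 1)) / (-a + 1) := by
    apply integral_rpow
    right
    constructor
    · intro h; linarith
    · apply Set.notMem_uIcc_of_lt <;> [linarith; positivity]
  have hm0 : (0:ℝ) ≤ ((N:ℝ) + m) ^ (-a + 1) := by positivity
  have heq : (((N:ℝ) + m) ^ (-a + 1) - (N:ℝ) ^ (-a + 1)) / (-a + 1)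
      = ((N:ℝ) ^ (-a + 1) - ((N:ℝ) + m) ^ (-a + 1)) / (a - 1) := by
    rw [div_eq_div_iff (by linarith) (by linarith)]; ring
  calc ∑ i ∈ Finset.range m, ((N : ℝ) + (i : ℝ) + 1) ^ (-a)
      = ∑ i ∈ Finset.range m, (fun x : ℝ => x ^ (-a)) ((N:ℝ) + (i + 1 : ℕ)) := by
        apply Finset.sum_congr rfl; intro i _; push_cast; ring_nf
    _ ≤ ∫ x in (N:ℝ)..((N:ℝ) + m), x ^ (-a) := key
    _ = ((N:ℝ) ^ (-a + 1) - ((N:ℝ) + m) ^ (-a + 1)) / (a - 1) := by rw [hint, heq]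
    _ ≤ (N : ℝ) ^ (1 - a) / (a - 1) := by
        rw [show (1:ℝ) - a = -a + 1 by ring]
        gcongr <;> linarith [hm0]

set_option maxHeartbeats 4000000 in
/-- Let `a > 1`, `b > 0`, `0 < η < 1`, and for `t ∈ ℕ` set
`S(t) = ∑_{k=1}^∞ k^(−a) (1 − η k^(−b))^(2t)` (indexed below by `k+1` over `k : ℕ`).
Then there are constants `0 < c₁ ≤ c₂` and `T` such that for all `t ≥ T`,
`c₁ t^(−(a−1)/b) ≤ S(t) ≤ c₂ t^(−(a−1)/b)`: the power-law test loss scaling. -/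
theorem power_law_loss_scaling (a b η : ℝ) (ha : 1 < a) (hb : 0 < b)
    (hη0 : 0 < η) (hη1 : η < 1) :
    ∃ c₁ c₂ : ℝ, ∃ T : ℕ, 0 < c₁ ∧ c₁ ≤ c₂ ∧
      ∀ t : ℕ, T ≤ t →
        c₁ * (t : ℝ) ^ (-((a - 1) / b))
            ≤ (∑' k : ℕ, ((k : ℝ) + 1) ^ (-a) * (1 - η * ((k : ℝ) + 1) ^ (-b)) ^ (2 * t))
        ∧ (∑' k : ℕ, ((k : ℝ) + 1) ^ (-a) * (1 - η * ((k : ℝ) + 1) ^ (-b)) ^ (2 * t))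
            ≤ c₂ * (t : ℝ) ^ (-((a - 1) / b)) := by
  obtain ⟨n, hn1, hbn⟩ : ∃ n : ℕ, 1 ≤ n ∧ a ≤ b * n := by
    refine ⟨⌈a / b⌉₊, ?_, ?_⟩
    · rw [Nat.one_le_ceil_iff]; positivity
    · calc a = b * (a / b) := by field_simp
        _ ≤ b * (⌈a / b⌉₊ : ℝ) := by
            have := Nat.le_ceil (a / b); gcongr
  have ha1 : (0:ℝ) < a - 1 := by linarith
  set c₁ : ℝ := (2:ℝ) ^ (-a) * (2:ℝ) ^ (1 - a) * Real.exp (-(4*η)) with hc1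
  set Ch : ℝ := (n.factorial : ℝ) / (2*η)^n * ((2:ℝ) ^ (b*(n:ℝ) - a + 1)) with hCh
  have hc1pos : 0 < c₁ := by positivity
  have hChpos : 0 < Ch := by positivity
  refine ⟨c₁, c₁ + Ch + 1/(a-1), 2, hc1pos, by nlinarith [one_div_pos.mpr ha1], ?_⟩
  intro t ht
  have ht2 : (2:ℝ) ≤ (t:ℝ) := by exact_mod_cast ht
  have ht0 : (0:ℝ) < (t:ℝ) := by linarith
  obtain ⟨P, hP⟩ : ∃ P : ℝ, P = (t:ℝ) ^ (-((a-1)/b)) := ⟨_, rfl⟩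
  rw [show (-((a - 1) / b)) = (-((a-1)/b)) from rfl, ← hP]
  have hPpos : 0 < P := hP ▸ Real.rpow_pos_of_pos ht0 _
  obtain ⟨x0, hx0⟩ : ∃ x0 : ℝ, x0 = (t:ℝ) ^ (1/b) := ⟨_, rfl⟩
  have hx0pos : 0 < x0 := hx0 ▸ Real.rpow_pos_of_pos ht0 _
  have hx1 : 1 ≤ x0 := hx0 ▸ Real.one_le_rpow (by linarith) (by positivity)
  obtain ⟨N, hNdef⟩ : ∃ N : ℕ, N = ⌈x0⌉₊ := ⟨_, rfl⟩
  have hN1 : 1 ≤ N := by rw [hNdef]; exact Nat.one_le_ceil_iff.mpr hx0pos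
  have hxN : x0 ≤ (N:ℝ) := by rw [hNdef]; exact Nat.le_ceil _
  have hN2 : (N:ℝ) ≤ 2 * x0 := by
    have h := Nat.ceil_lt_add_one hx0pos.le
    rw [← hNdef] at h; linarith
  have hNpos : (0:ℝ) < (N:ℝ) := by linarith
  have hx0b : x0 ^ b = (t:ℝ) := by
    rw [hx0, ← Real.rpow_mul ht0.le, one_div, inv_mul_cancel₀ hb.ne', Real.rpow_one]
  have hNbt : (t:ℝ) ≤ (N:ℝ) ^ b := by
    rw [← hx0b]; exact Real.rpow_le_rpow hx0pos.le hxN hb.le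
  have hPx : x0 ^ (1-a) = P := by
    rw [hx0, hP, ← Real.rpow_mul ht0.le]; congr 1; ring
  -- the summand
  obtain ⟨f, hfdef⟩ : ∃ f : ℕ → ℝ, f = fun k : ℕ =>
    ((k : ℝ) + 1) ^ (-a) * (1 - η * ((k : ℝ) + 1) ^ (-b)) ^ (2 * t) := ⟨_, rfl⟩
  rw [← hfdef]
  have hk1 : ∀ k : ℕ, (1:ℝ) ≤ (k:ℝ) + 1 := fun k => by
    have : (0:ℝ) ≤ (k:ℝ) := Nat.cast_nonneg k
    linarith
  have hkpos : ∀ k : ℕ, (0:ℝ) < (k:ℝ) + 1 := fun k => by linarith [hk1 k]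
  have hkb : ∀ k : ℕ, η * ((k:ℝ)+1) ^ (-b) ≤ η := fun k => by
    have h := Real.rpow_le_one_of_one_le_of_nonpos (hk1 k) (by linarith : -b ≤ 0)
    nlinarith
  have hkbpos : ∀ k : ℕ, (0:ℝ) < ((k:ℝ)+1) ^ (-b) :=
    fun k => Real.rpow_pos_of_pos (hkpos k) _
  have hbase : ∀ k : ℕ, (0:ℝ) < 1 - η * ((k:ℝ)+1) ^ (-b) := fun k => by
    linarith [hkb k]
  have hbase1 : ∀ k : ℕ, 1 - η * ((k:ℝ)+1) ^ (-b) ≤ 1 := fun k => by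
    nlinarith [hkbpos k]
  have hf0 : ∀ k, 0 ≤ f k := fun k => by
    simp only [hfdef]
    have h1 := hbase k
    have h2 := Real.rpow_pos_of_pos (hkpos k) (-a)
    positivity
  have hfle : ∀ k, f k ≤ ((k:ℝ)+1) ^ (-a) := fun k => by
    simp only [hfdef]
    have h1 : (1 - η * ((k:ℝ)+1) ^ (-b)) ^ (2*t) ≤ 1 := pow_le_one₀ (hbase k).le (hbase1 k)
    have h2 := (Real.rpow_pos_of_pos (hkpos k) (-a)).le
    nlinarith
  have hfs : Summable f := Summable.of_nonneg_of_le hf0 hfle (summable_aux ha)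
  constructor
  · -- LOWER BOUND
    have hterm : ∀ k ∈ Finset.Ico (N-1) (2*N-1),
        (2*(N:ℝ)) ^ (-a) * Real.exp (-(4*η)) ≤ f k := by
      intro k hk
      rw [Finset.mem_Ico] at hk
      have hkN : (N:ℝ) ≤ (k:ℝ) + 1 := by
        have : N ≤ k + 1 := by omega
        exact_mod_cast this
      have hk2N : (k:ℝ) + 1 ≤ 2*(N:ℝ) := by
        have : k + 1 ≤ 2*N := by omega
        exact_mod_cast this
      have part1 : (2*(N:ℝ)) ^ (-a) ≤ ((k:ℝ)+1) ^ (-a) :=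
        Real.rpow_le_rpow_of_nonpos (hkpos k) hk2N (by linarith)
      have hub : ((k:ℝ)+1) ^ (-b) ≤ (t:ℝ)⁻¹ := by
        have s1 : ((k:ℝ)+1) ^ (-b) ≤ (N:ℝ) ^ (-b) :=
          Real.rpow_le_rpow_of_nonpos hNpos hkN (by linarith)
        have s2 : (N:ℝ) ^ (-b) = ((N:ℝ) ^ b)⁻¹ := by
          rw [← Real.rpow_neg hNpos.le]
        have s3 : ((N:ℝ) ^ b)⁻¹ ≤ (t:ℝ)⁻¹ := inv_anti₀ ht0 hNbt
        rw [s2] at s1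
        exact s1.trans s3
      have hxt : η * ((k:ℝ)+1) ^ (-b) ≤ η / t := by
        rw [div_eq_mul_inv]
        exact mul_le_mul_of_nonneg_left hub hη0.le
      have h12 : η / (t:ℝ) ≤ 1/2 := by
        rw [div_le_div_iff₀ ht0 (by norm_num : (0:ℝ) < 2)]; nlinarith
      have hE : Real.exp (-(2*(η/t))) ≤ 1 - η/t :=
        exp_neg_two_mul_le (by positivity) h12
      have part2 : Real.exp (-(4*η)) ≤ (1 - η * ((k:ℝ)+1) ^ (-b)) ^ (2*t) := by
        calc Real.exp (-(4*η)) = Real.exp (-(2*(η/t))) ^ (2*t) := by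
              rw [← Real.exp_nat_mul]
              congr 1
              push_cast
              field_simp
              ring
          _ ≤ (1 - η * ((k:ℝ)+1) ^ (-b)) ^ (2*t) := by
              apply pow_le_pow_left₀ (Real.exp_pos _).le
              linarith
      simp only [hfdef]
      exact mul_le_mul part1 part2 (Real.exp_pos _).le
        (Real.rpow_pos_of_pos (hkpos k) _).le
    have hcard : (Finset.Ico (N-1) (2*N-1)).card = N := by
      rw [Nat.card_Ico]; omega
    have hsum : (N:ℝ) * ((2*(N:ℝ)) ^ (-a) * Real.exp (-(4*η)))
        ≤ ∑ k ∈ Finset.Ico (N-1) (2*N-1), f k := by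
      have h := Finset.card_nsmul_le_sum (Finset.Ico (N-1) (2*N-1)) f
        ((2*(N:ℝ)) ^ (-a) * Real.exp (-(4*η))) hterm
      rw [hcard, nsmul_eq_mul] at h
      exact h
    have hts : ∑ k ∈ Finset.Ico (N-1) (2*N-1), f k ≤ ∑' k, f k :=
      Summable.sum_le_tsum _ (fun k _ => hf0 k) hfs
    have hN1a : (N:ℝ) ^ (1-a) = (N:ℝ) * (N:ℝ) ^ (-a) := by
      rw [show (1:ℝ) - a = 1 + -a by ring, Real.rpow_add hNpos, Real.rpow_one]
    have hNlow : (2:ℝ)^(1-a) * x0 ^ (1-a) ≤ (N:ℝ) ^ (1-a) := by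
      rw [← Real.mul_rpow (by norm_num) hx0pos.le]
      exact Real.rpow_le_rpow_of_nonpos hNpos hN2 (by linarith)
    have h2N : (2*(N:ℝ)) ^ (-a) = (2:ℝ)^(-a) * (N:ℝ)^(-a) :=
      Real.mul_rpow (by norm_num) hNpos.le
    calc c₁ * P = (2:ℝ)^(-a) * Real.exp (-(4*η)) * ((2:ℝ)^(1-a) * x0^(1-a)) := by
          rw [hc1, hPx]; ring
      _ ≤ (2:ℝ)^(-a) * Real.exp (-(4*η)) * (N:ℝ)^(1-a) := by
          have h0 : (0:ℝ) ≤ (2:ℝ)^(-a) * Real.exp (-(4*η)) := by positivity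
          exact mul_le_mul_of_nonneg_left hNlow h0
      _ = (N:ℝ) * ((2*(N:ℝ)) ^ (-a) * Real.exp (-(4*η))) := by
          rw [h2N, hN1a]; ring
      _ ≤ ∑ k ∈ Finset.Ico (N-1) (2*N-1), f k := hsum
      _ ≤ ∑' k, f k := hts
  · -- UPPER BOUND
    have hsplit : (∑ k ∈ Finset.range N, f k) + (∑' k, f (k + N)) = ∑' k, f k :=
      hfs.sum_add_tsum_nat_add N
    -- head
    have hhead : ∑ k ∈ Finset.range N, f k ≤ Ch * P := by
      have hD : ∀ k ∈ Finset.range N, f k ≤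
          (n.factorial : ℝ) / ((2*η)^n * (t:ℝ)^n) * (N:ℝ) ^ (b*(n:ℝ) - a) := by
        intro k hk
        rw [Finset.mem_range] at hk
        set u : ℝ := (k:ℝ) + 1 with hu
        have hu0 : 0 < u := hkpos k
        have huN : u ≤ (N:ℝ) := by
          rw [hu]
          have : k + 1 ≤ N := hk
          exact_mod_cast this
        set Y : ℝ := 2*(t:ℝ) * (η * u ^ (-b)) with hY
        have hY0 : 0 < Y := by
          have := hkbpos k; rw [hY]; positivity
        have step1 : (1 - η * u ^ (-b)) ^ (2*t) ≤ Real.exp (-Y) := by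
          have h1 : 1 - η * u ^ (-b) ≤ Real.exp (-(η * u ^ (-b))) := by
            have := Real.add_one_le_exp (-(η * u ^ (-b))); linarith
          calc (1 - η * u ^ (-b)) ^ (2*t)
              ≤ Real.exp (-(η * u ^ (-b))) ^ (2*t) :=
                pow_le_pow_left₀ (hbase k).le h1 _
            _ = Real.exp (-Y) := by
                rw [← Real.exp_nat_mul]; congr 1; rw [hY]; push_cast; ring
        have step2 : Real.exp (-Y) ≤ (n.factorial : ℝ) / Y^n :=
          exp_neg_le_factorial_div_pow hY0 n
        have hYpow : Y ^ n = (2*η)^n * (t:ℝ)^n * u ^ (-(b*(n:ℝ))) := by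
          rw [hY, show 2*(t:ℝ) * (η * u ^ (-b)) = (2*η) * (t:ℝ) * (u ^ (-b)) by ring,
            mul_pow, mul_pow, ← Real.rpow_natCast (u ^ (-b)) n,
            ← Real.rpow_mul hu0.le]
          congr 2
          ring
        have step3 : (n.factorial : ℝ) / Y^n
            = (n.factorial : ℝ) / ((2*η)^n * (t:ℝ)^n) * u ^ (b*(n:ℝ)) := by
          rw [hYpow, Real.rpow_neg hu0.le]
          have h1 : ((2*η)^n * (t:ℝ)^n : ℝ) ≠ 0 := by positivity
          have h2 : u ^ (b*(n:ℝ)) ≠ 0 := by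
            exact (Real.rpow_pos_of_pos hu0 _).ne'
          field_simp
        have step4 : u ^ (-a) * u ^ (b*(n:ℝ)) = u ^ (b*(n:ℝ) - a) := by
          rw [← Real.rpow_add hu0]; congr 1; ring
        have step5 : u ^ (b*(n:ℝ) - a) ≤ (N:ℝ) ^ (b*(n:ℝ) - a) := by
          apply Real.rpow_le_rpow hu0.le huN
          have : a ≤ b * (n:ℝ) := hbn
          linarith
        have hC0 : (0:ℝ) ≤ (n.factorial : ℝ) / ((2*η)^n * (t:ℝ)^n) := by positivity
        calc f k = u ^ (-a) * (1 - η * u ^ (-b)) ^ (2*t) := by simp only [hfdef, hu]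
          _ ≤ u ^ (-a) * ((n.factorial : ℝ) / Y^n) := by
              apply mul_le_mul_of_nonneg_left (step1.trans step2)
                (Real.rpow_pos_of_pos hu0 _).le
          _ = (n.factorial : ℝ) / ((2*η)^n * (t:ℝ)^n) * u ^ (b*(n:ℝ) - a) := by
              rw [step3, ← step4]; ring
          _ ≤ (n.factorial : ℝ) / ((2*η)^n * (t:ℝ)^n) * (N:ℝ) ^ (b*(n:ℝ) - a) :=
              mul_le_mul_of_nonneg_left step5 hC0
      have hsum2 : ∑ k ∈ Finset.range N, f k ≤
          (N:ℝ) * ((n.factorial : ℝ) / ((2*η)^n * (t:ℝ)^n) * (N:ℝ) ^ (b*(n:ℝ) - a)) := by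
        have h := Finset.sum_le_card_nsmul (Finset.range N) f
          ((n.factorial : ℝ) / ((2*η)^n * (t:ℝ)^n) * (N:ℝ) ^ (b*(n:ℝ) - a)) hD
        rw [Finset.card_range, nsmul_eq_mul] at h
        exact h
      have hexp0 : (0:ℝ) ≤ b*(n:ℝ) - a + 1 := by
        have : a ≤ b * (n:ℝ) := hbn; linarith
      have hNN : (N:ℝ) * (N:ℝ) ^ (b*(n:ℝ) - a) = (N:ℝ) ^ (b*(n:ℝ) - a + 1) := by
        rw [show b*(n:ℝ) - a + 1 = 1 + (b*(n:ℝ) - a) by ring, Real.rpow_add hNpos,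
          Real.rpow_one]
      have hNle : (N:ℝ) ^ (b*(n:ℝ) - a + 1) ≤ (2*x0) ^ (b*(n:ℝ) - a + 1) :=
        Real.rpow_le_rpow hNpos.le hN2 hexp0
      have h2x0 : (2*x0) ^ (b*(n:ℝ) - a + 1)
          = (2:ℝ) ^ (b*(n:ℝ) - a + 1) * x0 ^ (b*(n:ℝ) - a + 1) :=
        Real.mul_rpow (by norm_num) hx0pos.le
      have hx0P : ((t:ℝ)^n)⁻¹ * x0 ^ (b*(n:ℝ) - a + 1) = P := by
        rw [hx0, ← Real.rpow_mul ht0.le, ← Real.rpow_natCast (t:ℝ) n,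
          ← Real.rpow_neg ht0.le, hP, ← Real.rpow_add ht0]
        congr 1
        field_simp
        ring
      calc ∑ k ∈ Finset.range N, f k
          ≤ (N:ℝ) * ((n.factorial : ℝ) / ((2*η)^n * (t:ℝ)^n) * (N:ℝ) ^ (b*(n:ℝ) - a)) :=
            hsum2
        _ = (n.factorial : ℝ) / (2*η)^n * (((t:ℝ)^n)⁻¹ * (N:ℝ) ^ (b*(n:ℝ) - a + 1)) := by
            rw [← hNN]; field_simp
        _ ≤ (n.factorial : ℝ) / (2*η)^n * (((t:ℝ)^n)⁻¹ * (2*x0) ^ (b*(n:ℝ) - a + 1)) := by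
            have h0 : (0:ℝ) ≤ (n.factorial : ℝ) / (2*η)^n := by positivity
            have h1 : (0:ℝ) ≤ ((t:ℝ)^n)⁻¹ := by positivity
            apply mul_le_mul_of_nonneg_left _ h0
            exact mul_le_mul_of_nonneg_left hNle h1
        _ = Ch * P := by
            rw [h2x0, hCh, ← hx0P]; ring
    -- tail
    have htail : (∑' k, f (k + N)) ≤ (1/(a-1)) * P := by
      have hg : Summable (fun k : ℕ => ((N : ℝ) + (k : ℝ) + 1) ^ (-a)) := by
        have h := (summable_nat_add_iff N).mpr (summable_aux ha)
        refine h.congr fun k => ?_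
        push_cast
        ring_nf
      have hfs2 : Summable fun k : ℕ => f (k + N) := (summable_nat_add_iff N).mpr hfs
      have hle2 : ∀ k : ℕ, f (k + N) ≤ ((N : ℝ) + (k : ℝ) + 1) ^ (-a) := by
        intro k
        have h := hfle (k + N)
        have hc : ((k + N : ℕ) : ℝ) + 1 = (N:ℝ) + (k:ℝ) + 1 := by push_cast; ring
        rw [hc] at h
        exact h
      have hstep : (∑' k, f (k + N)) ≤ ∑' k : ℕ, ((N : ℝ) + (k : ℝ) + 1) ^ (-a) :=
        Summable.tsum_le_tsum hle2 hfs2 hg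
      have hNP : (N:ℝ) ^ (1-a) ≤ P := by
        rw [← hPx]
        exact Real.rpow_le_rpow_of_nonpos hx0pos hxN (by linarith)
      calc (∑' k, f (k + N)) ≤ ∑' k : ℕ, ((N : ℝ) + (k : ℝ) + 1) ^ (-a) := hstep
        _ ≤ (N:ℝ) ^ (1-a) / (a-1) := tail_bound ha hN1
        _ ≤ (1/(a-1)) * P := by
            rw [div_eq_mul_inv, one_div, mul_comm]
            exact mul_le_mul_of_nonneg_left hNP (by positivity)
    calc (∑' k, f k) = (∑ k ∈ Finset.range N, f k) + (∑' k, f (k + N)) := hsplit.symm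
      _ ≤ Ch * P + (1/(a-1)) * P := add_le_add hhead htail
      _ ≤ (c₁ + Ch + 1/(a-1)) * P := by nlinarith [mul_pos hc1pos hPpos]
end
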